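/- arXiv:2002.02727 — 3 statements merged into one kernel-verified Lean document; each statement's English description precedes it below -/
import Mathlib

section
/- Let B be a Noetherian local commutative ring with maximal ideal n, and let M be a B-module that is flat over B. Then the n-adic (separated) completion of M, i.e. the inverse limit of the modules M/n^i·M, is also a flat B-module. -/
open LinearMap TensorProduct

set_option linter.unusedSectionVars false

namespace FlatCompletionAux

variable {R : Type*} [CommRing R] (I : Ideal R)



section MapLin

variable {M : Type*} [AddCommGroup M] [Module R M]
variable {N : Type*} [AddCommGroup N] [Module R N]

theorem map_add_apply (f g : M →ₗ[R] N) (x : AdicCompletion I M) :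
    AdicCompletion.map I (f + g) x =
      AdicCompletion.map I f x + AdicCompletion.map I g x := by
  apply AdicCompletion.induction_on I M x (fun a => ?_)
  ext n
  simp [AdicCompletion.val_add]

theorem map_smul_apply (c : R) (f : M →ₗ[R] N) (x : AdicCompletion I M) :
    AdicCompletion.map I (c • f) x = c • AdicCompletion.map I f x := by
  apply AdicCompletion.induction_on I M x (fun a => ?_)
  ext n
  simp [AdicCompletion.val_smul]

theorem map_sum_apply {α : Type*} (s : Finset α) (f : α → (M →ₗ[R] N))
    (x : AdicCompletion I M) :
    AdicCompletion.map I (∑ i ∈ s, f i) x = ∑ i ∈ s, AdicCompletion.map I (f i) x := by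
  classical
  induction s using Finset.induction_on with
  | empty => simp
  | insert _ _ hi ih =>
      rw [Finset.sum_insert hi, Finset.sum_insert hi, map_add_apply, ih]

theorem map_id_apply (x : AdicCompletion I M) :
    AdicCompletion.map I (LinearMap.id (M := M)) x = x := by
  rw [AdicCompletion.map_id]; rfl

end MapLin

section Key

variable {M' N' P' : Type*} [AddCommGroup M'] [AddCommGroup N'] [AddCommGroup P']
  [Module R M'] [Module R N'] [Module R P']

private theorem mem_of_le {X : Type*} [AddCommGroup X] [Module R X] {m j : ℕ} (h : j ≤ m)
    {y : X} (hy : y ∈ (I ^ m • ⊤ : Submodule R X)) : y ∈ (I ^ j • ⊤ : Submodule R X) :=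
  Submodule.smul_mono_left (Ideal.pow_le_pow_right h) hy

theorem key {f : M' →ₗ[R] N'} {g : N' →ₗ[R] P'} {k : ℕ} (hfg : Function.Exact f g)
    (hf : ∀ n, (I ^ (n + k) • ⊤ : Submodule R N') ⊓ LinearMap.range f ≤
      Submodule.map f (I ^ n • ⊤ : Submodule R M'))
    (hg : ∀ n (y : N'), g y ∈ (I ^ (n + k) • ⊤ : Submodule R P') →
      ∃ d ∈ (I ^ n • ⊤ : Submodule R N'), g d = g y)
    (x : AdicCompletion I N') (hx : AdicCompletion.map I g x = 0) :
    x ∈ LinearMap.range (AdicCompletion.map I f) := by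
  revert hx
  apply AdicCompletion.induction_on I N' x (fun b => ?_)
  intro hx
  have hb : ∀ n, g (b n) ∈ (I ^ n • ⊤ : Submodule R P') := by
    intro n
    simpa using congrArg (fun z => z.val n) hx
  -- the inductive step
  have step : ∀ (n : ℕ) (a : M'), f a - b (2 * k + n) ∈ (I ^ (k + n) • ⊤ : Submodule R N') →
      ∃ z, z ∈ (I ^ n • ⊤ : Submodule R M') ∧
        f (a + z) - b (2 * k + n + 1) ∈ (I ^ (k + n + 1) • ⊤ : Submodule R N') := by
    intro n a ha
    obtain ⟨d, hd, hgd⟩ := hg (k + n + 1) (b (2 * k + n + 1))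
      (mem_of_le I (by omega) (hb (2 * k + n + 1)))
    obtain ⟨y, hy⟩ := (hfg (b (2 * k + n + 1) - d)).mp (by simp [map_sub, hgd])
    have hbb : b (2 * k + n + 1) - b (2 * k + n) ∈ (I ^ (k + n) • ⊤ : Submodule R N') := by
      refine mem_of_le I (show k + n ≤ 2 * k + n by omega) ?_
      have := b.property (show 2 * k + n ≤ 2 * k + n + 1 by omega)
      simpa using (SModEq.sub_mem.mp this.symm)
    have hmem : f y - f a ∈ (I ^ (n + k) • ⊤ : Submodule R N') ⊓ LinearMap.range f := by
      constructor
      · have : f y - f a = (b (2 * k + n + 1) - b (2 * k + n)) + (-d) -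
            (f a - b (2 * k + n)) := by rw [hy]; abel
        rw [show n + k = k + n by omega, this]
        exact Submodule.sub_mem _ (Submodule.add_mem _ hbb
          (neg_mem (mem_of_le I (by omega) hd))) ha
      · exact ⟨y - a, by simp [map_sub]⟩
    obtain ⟨z, hz, hfz⟩ := hf n hmem
    refine ⟨z, hz, ?_⟩
    have : f (a + z) - b (2 * k + n + 1) = -d := by
      rw [map_add, hfz, hy]; abel
    rw [this]
    exact neg_mem hd
  -- base case
  obtain ⟨d0, hd0, hgd0⟩ := hg k (b (2 * k)) (mem_of_le I (by omega) (hb (2 * k)))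
  obtain ⟨y0, hy0⟩ := (hfg (b (2 * k) - d0)).mp (by simp [map_sub, hgd0])
  -- the approximating sequence
  let A : (n : ℕ) → {a : M' // f a - b (2 * k + n) ∈ (I ^ (k + n) • ⊤ : Submodule R N')} :=
    fun n => Nat.rec
      ⟨y0, by
        rw [hy0]
        have : b (2 * k) - d0 - b (2 * k + 0) = -d0 := by norm_num
        rw [this]
        exact neg_mem hd0⟩
      (fun n p => ⟨p.1 + (step n p.1 p.2).choose, (step n p.1 p.2).choose_spec.2⟩) n
  have hAsucc : ∀ n, (A (n + 1)).1 - (A n).1 ∈ (I ^ n • ⊤ : Submodule R M') := by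
    intro n
    have : (A (n + 1)).1 - (A n).1 = (step n (A n).1 (A n).2).choose := by
      show (A n).1 + (step n (A n).1 (A n).2).choose - (A n).1 = _
      abel
    rw [this]
    exact (step n (A n).1 (A n).2).choose_spec.1
  refine ⟨AdicCompletion.mk I M' (AdicCompletion.AdicCauchySequence.mk I M' (fun n => (A n).1) ?_), ?_⟩
  · intro n
    rw [SModEq.sub_mem]
    have := hAsucc n
    simpa using neg_mem this
  · ext n
    have h1 : f ((A n).1) - b n ∈ (I ^ n • ⊤ : Submodule R N') := by
      have h2 : f ((A n).1) - b (2 * k + n) ∈ (I ^ n • ⊤ : Submodule R N') :=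
        mem_of_le I (by omega) (A n).2
      have h3 : b (2 * k + n) - b n ∈ (I ^ n • ⊤ : Submodule R N') := by
        have := b.property (show n ≤ 2 * k + n by omega)
        simpa using (SModEq.sub_mem.mp this.symm)
      have : f ((A n).1) - b n = (f ((A n).1) - b (2 * k + n)) + (b (2 * k + n) - b n) := by
        abel
      rw [this]
      exact Submodule.add_mem _ h2 h3
    simpa [Submodule.Quotient.eq] using h1

end Key


section Pi

variable {M : Type*} [AddCommGroup M] [Module R M]
variable {ι : Type*} [Fintype ι] [DecidableEq ι]
variable {κ : Type*} [Fintype κ] [DecidableEq κ]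

variable (M) in
/-- The map `(ι → M) →ₗ (κ → M)` induced by a map `(ι → R) →ₗ (κ → R)`. -/
noncomputable def piMap (φ : (ι → R) →ₗ[R] (κ → R)) : (ι → M) →ₗ[R] (κ → M) :=
  LinearMap.pi fun kk => ∑ i, φ (Pi.single i 1) kk • LinearMap.proj i

theorem piMap_apply (φ : (ι → R) →ₗ[R] (κ → R)) (m : ι → M) (kk : κ) :
    piMap M φ m kk = ∑ i, φ (Pi.single i 1) kk • m i := by
  simp [piMap]

theorem apply_eq_sum (φ : (ι → R) →ₗ[R] (κ → R)) (c : ι → R) :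
    φ c = ∑ i, c i • φ (Pi.single i 1) := by
  have h1 : ∀ i, (Pi.single i (c i) : ι → R) = c i • (Pi.single i (1 : R) : ι → R) :=
    fun i => by rw [← Pi.single_smul, smul_eq_mul, mul_one]
  conv_lhs => rw [← Finset.univ_sum_single c]
  rw [map_sum]
  refine Finset.sum_congr rfl fun i _ => ?_
  rw [h1 i, map_smul]

theorem piMap_smul_vec (φ : (ι → R) →ₗ[R] (κ → R)) (c : ι → R) (m : M) :
    piMap M φ (fun i => c i • m) = fun kk => φ c kk • m := by
  funext kk
  rw [piMap_apply, apply_eq_sum φ c]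
  rw [Finset.sum_apply, Finset.sum_smul]
  refine Finset.sum_congr rfl fun i _ => ?_
  simp [smul_smul, mul_comm]

variable (M) in
noncomputable def smulPi (c : ι → R) : M →ₗ[R] (ι → M) :=
  LinearMap.pi fun i => c i • LinearMap.id

theorem smulPi_apply (c : ι → R) (m : M) : smulPi M c m = fun i => c i • m := rfl

theorem piMap_comp_smulPi (φ : (ι → R) →ₗ[R] (κ → R)) (c : ι → R) :
    (piMap M φ) ∘ₗ smulPi M c = smulPi M (φ c) := by
  refine LinearMap.ext fun m => ?_
  have := piMap_smul_vec (M := M) φ c m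
  simp only [coe_comp, Function.comp_apply, smulPi_apply]
  exact this

theorem proj_comp_smulPi (c : ι → R) (i : ι) :
    (LinearMap.proj i : (ι → M) →ₗ[R] M) ∘ₗ smulPi M c = c i • LinearMap.id := rfl

theorem sum_smulPi_single_comp_proj :
    (∑ i, (smulPi M (Pi.single i 1)) ∘ₗ (LinearMap.proj i : (ι → M) →ₗ[R] M)) =
      LinearMap.id := by
  refine LinearMap.ext fun m => ?_
  funext j
  simp only [LinearMap.sum_apply, coe_comp, Function.comp_apply, proj_apply, smulPi_apply,
    Finset.sum_apply, id_coe, id_eq]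
  simp [Pi.single_apply]

variable (M) in
noncomputable def theta : (AdicCompletion I M) ⊗[R] (ι → R) →ₗ[R] AdicCompletion I (ι → M) :=
  TensorProduct.lift <|
    { toFun := fun x =>
        { toFun := fun c => AdicCompletion.map I (smulPi M c) x
          map_add' := fun c c' => by
            have h : smulPi M (c + c') = smulPi M c + smulPi M c' := by
              refine LinearMap.ext fun m => ?_
              funext i
              simp [smulPi_apply, add_smul]
            show AdicCompletion.map I (smulPi M (c + c')) x = _
            rw [h, map_add_apply]
          map_smul' := fun r c => by
            have h : smulPi M (r • c) = r • smulPi M c := by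
              refine LinearMap.ext fun m => ?_
              funext i
              simp [smulPi_apply, smul_smul]
            show AdicCompletion.map I (smulPi M (r • c)) x = _
            rw [h, map_smul_apply]
            rfl }
      map_add' := fun x y => by
        refine LinearMap.ext fun c => ?_
        exact (AdicCompletion.map I (smulPi M c)).map_add x y
      map_smul' := fun r x => by
        refine LinearMap.ext fun c => ?_
        exact (AdicCompletion.map I (smulPi M c)).map_smul_of_tower r x }

theorem theta_tmul (x : AdicCompletion I M) (c : ι → R) :
    theta I M (x ⊗ₜ c) = AdicCompletion.map I (smulPi M c) x := rfl

variable (M) in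
noncomputable def thetaInv : AdicCompletion I (ι → M) →ₗ[R] (AdicCompletion I M) ⊗[R] (ι → R) :=
  ∑ i, (TensorProduct.mk R (AdicCompletion I M) (ι → R)).flip (Pi.single i 1) ∘ₗ
    (AdicCompletion.map I (LinearMap.proj i)).restrictScalars R

theorem thetaInv_apply (y : AdicCompletion I (ι → M)) :
    thetaInv I M y = ∑ i, (AdicCompletion.map I (LinearMap.proj i) y) ⊗ₜ Pi.single i 1 := by
  simp [thetaInv]

theorem theta_thetaInv (y : AdicCompletion I (ι → M)) :
    theta I M (thetaInv I M y) = y := by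
  rw [thetaInv_apply, map_sum]
  have h1 : ∀ i : ι, theta I M ((AdicCompletion.map I (LinearMap.proj i) y) ⊗ₜ Pi.single i 1)
      = AdicCompletion.map I ((smulPi M (Pi.single i 1)) ∘ₗ
          (LinearMap.proj i : (ι → M) →ₗ[R] M)) y := by
    intro i
    rw [theta_tmul, AdicCompletion.map_comp_apply]
  rw [Finset.sum_congr rfl fun i _ => h1 i, ← map_sum_apply, sum_smulPi_single_comp_proj,
    map_id_apply]

theorem thetaInv_theta (z : (AdicCompletion I M) ⊗[R] (ι → R)) :
    thetaInv I M (theta I M z) = z := by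
  induction z with
  | zero => simp
  | add x y hx hy => rw [map_add, map_add, hx, hy]
  | tmul x c =>
      rw [theta_tmul, thetaInv_apply]
      have h1 : ∀ i : ι, AdicCompletion.map I (LinearMap.proj (R := R) (φ := fun _ : ι => M) i)
          (AdicCompletion.map I (smulPi M c) x) = c i • x := by
        intro i
        rw [AdicCompletion.map_comp_apply, proj_comp_smulPi, map_smul_apply, map_id_apply]
      rw [Finset.sum_congr rfl fun i _ => by rw [h1 i]]
      have h2 : ∀ i : ι, (c i • x) ⊗ₜ[R] (Pi.single i (1 : R) : ι → R) =
          x ⊗ₜ (Pi.single i (c i) : ι → R) := by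
        intro i
        rw [TensorProduct.smul_tmul]
        congr 1
        rw [← Pi.single_smul, smul_eq_mul, mul_one]
      rw [Finset.sum_congr rfl fun i _ => h2 i, ← TensorProduct.tmul_sum,
        Finset.univ_sum_single]

variable (M) in
noncomputable def thetaEquiv : (AdicCompletion I M) ⊗[R] (ι → R) ≃ₗ[R] AdicCompletion I (ι → M) :=
  LinearEquiv.ofLinear (theta I M) (thetaInv I M)
    (LinearMap.ext fun y => theta_thetaInv I y)
    (LinearMap.ext fun z => thetaInv_theta I z)

theorem theta_naturality (φ : (ι → R) →ₗ[R] (κ → R)) (z : (AdicCompletion I M) ⊗[R] (ι → R)) :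
    theta I M (lTensor (AdicCompletion I M) φ z) =
      AdicCompletion.map I (piMap M φ) (theta I M z) := by
  induction z with
  | zero => simp
  | add x y hx hy => simp only [map_add, hx, hy]
  | tmul x c =>
      rw [lTensor_tmul, theta_tmul, theta_tmul, AdicCompletion.map_comp_apply,
        piMap_comp_smulPi]

theorem piScalarRight_naturality (φ : (ι → R) →ₗ[R] (κ → R)) (z : M ⊗[R] (ι → R)) :
    TensorProduct.piScalarRight R R M κ (lTensor M φ z) =
      piMap M φ (TensorProduct.piScalarRight R R M ι z) := by
  induction z with
  | zero => simp
  | add x y hx hy => simp only [map_add, hx, hy]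
  | tmul x c =>
      rw [lTensor_tmul]
      rw [TensorProduct.piScalarRight_apply, TensorProduct.piScalarRight_apply,
        TensorProduct.piScalarRightHom_tmul, TensorProduct.piScalarRightHom_tmul]
      exact (piMap_smul_vec φ c x).symm


end Pi

section Tsub

variable {M : Type*} [AddCommGroup M] [Module R M]
variable {ι : Type*} [Fintype ι] [DecidableEq ι]
variable {κ : Type*} [Fintype κ] [DecidableEq κ]

variable (M) in
/-- The image of `Q ⊗ M` inside `κ → M`. -/
noncomputable def tsub (Q : Submodule R (κ → R)) : Submodule R (κ → M) :=
  Submodule.span R {x | ∃ q ∈ Q, ∃ m : M, x = fun k => q k • m}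

theorem gen_mem_tsub {Q : Submodule R (κ → R)} {q : κ → R} (hq : q ∈ Q) (m : M) :
    (fun k => q k • m) ∈ tsub M Q :=
  Submodule.subset_span ⟨q, hq, m, rfl⟩

theorem tsub_mono {Q Q' : Submodule R (κ → R)} (h : Q ≤ Q') : tsub M Q ≤ tsub M Q' := by
  refine Submodule.span_mono ?_
  rintro x ⟨q, hq, m, rfl⟩
  exact ⟨q, h hq, m, rfl⟩

theorem smul_mem_tsub_smul {Q : Submodule R (κ → R)} (J : Ideal R) {a : R} (ha : a ∈ J)
    {x : κ → M} (hx : x ∈ tsub M Q) : a • x ∈ tsub M (J • Q) := by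
  induction hx using Submodule.span_induction with
  | mem x h =>
      obtain ⟨q, hq, m, rfl⟩ := h
      have h2 : a • (fun k => q k • m) = fun k => (a • q) k • m := by
        funext k
        simp [smul_smul]
      rw [h2]
      exact gen_mem_tsub (Submodule.smul_mem_smul ha hq) m
  | zero => simpa using Submodule.zero_mem _
  | add x y _ _ hx hy => rw [smul_add]; exact Submodule.add_mem _ hx hy
  | smul r x _ hx =>
      rw [smul_comm]
      exact Submodule.smul_mem _ r hx

theorem top_smul_le_tsub (J : Ideal R) :
    (J • ⊤ : Submodule R (κ → M)) ≤ tsub M (J • (⊤ : Submodule R (κ → R))) := by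
  refine Submodule.smul_le.mpr fun a ha x _ => ?_
  have hx : x ∈ tsub M (⊤ : Submodule R (κ → R)) := by
    have h2 : x = ∑ k, (fun k' => (Pi.single k (1 : R) : κ → R) k' • x k) := by
      funext j
      simp [Pi.single_apply]
    rw [h2]
    exact Submodule.sum_mem _ fun k _ => gen_mem_tsub Submodule.mem_top (x k)
  exact smul_mem_tsub_smul J ha hx

theorem tsub_smul_le (J : Ideal R) (Q : Submodule R (κ → R)) :
    tsub M (J • Q) ≤ J • tsub M Q := by
  rw [tsub, Submodule.span_le]
  rintro x ⟨q, hq, m, rfl⟩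
  refine Submodule.smul_induction_on
    (p := fun q' => ((fun k => q' k • m) ∈ (J • tsub M Q : Submodule R (κ → M)))) hq ?_ ?_
  · intro a ha q0 hq0
    have h2 : (fun k => (a • q0) k • m) = a • (fun k => q0 k • m) := by
      funext k
      simp [smul_smul]
    rw [h2]
    exact Submodule.smul_mem_smul ha (gen_mem_tsub hq0 m)
  · intro x y hx hy
    have h2 : (fun k => (x + y) k • m) =
        (fun k => x k • m) + (fun k => y k • m) := by
      funext k
      simp [add_smul]
    rw [h2]
    exact Submodule.add_mem _ hx hy

variable (M) in
noncomputable def rho (Q : Submodule R (κ → R)) : M ⊗[R] Q →ₗ[R] (κ → M) :=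
  (TensorProduct.piScalarRight R R M κ).toLinearMap ∘ₗ lTensor M Q.subtype

theorem rho_tmul (Q : Submodule R (κ → R)) (m : M) (q : Q) :
    rho M Q (m ⊗ₜ q) = fun k => (q : κ → R) k • m := by
  simp [rho, TensorProduct.piScalarRight_apply, TensorProduct.piScalarRightHom_tmul]

theorem tsub_eq_range_rho (Q : Submodule R (κ → R)) :
    tsub M Q = LinearMap.range (rho M Q) := by
  apply le_antisymm
  · rw [tsub, Submodule.span_le]
    rintro x ⟨q, hq, m, rfl⟩
    exact ⟨m ⊗ₜ ⟨q, hq⟩, rho_tmul Q m ⟨q, hq⟩⟩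
  · rintro _ ⟨w, rfl⟩
    induction w with
    | zero => simp
    | tmul m q => rw [rho_tmul]; exact gen_mem_tsub q.2 m
    | add a b ha hb => rw [map_add]; exact Submodule.add_mem _ ha hb

theorem tsub_inf_le [Module.Flat R M] (A B : Submodule R (κ → R)) :
    tsub M A ⊓ tsub M B ≤ tsub M (A ⊓ B) := by
  rintro x ⟨hxA, hxB⟩
  rw [tsub_eq_range_rho] at hxA hxB ⊢
  obtain ⟨wA, hwA⟩ := hxA
  obtain ⟨wB, hwB⟩ := hxB
  set δ : (↥A × ↥B) →ₗ[R] (κ → R) :=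
    A.subtype ∘ₗ LinearMap.fst R A B - B.subtype ∘ₗ LinearMap.snd R A B with hδ
  set ν : ↥(A ⊓ B) →ₗ[R] (↥A × ↥B) :=
    LinearMap.prod (Submodule.inclusion inf_le_left) (Submodule.inclusion inf_le_right) with hν
  have hexact : Function.Exact ν δ := by
    rw [LinearMap.exact_iff]
    apply le_antisymm
    · rintro ⟨a, b⟩ hab
      have h1 : (a : κ → R) - (b : κ → R) = 0 := by simpa [hδ] using hab
      have h2 : (a : κ → R) = (b : κ → R) := by rwa [sub_eq_zero] at h1
      have hmem : (a : κ → R) ∈ A ⊓ B := ⟨a.2, h2 ▸ b.2⟩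
      refine ⟨⟨(a : κ → R), hmem⟩, ?_⟩
      refine Prod.ext (Subtype.ext rfl) (Subtype.ext h2)
    · rintro _ ⟨c, rfl⟩
      simp [hν, hδ, LinearMap.mem_ker]
  have hT := Module.Flat.lTensor_exact M hexact
  set e := TensorProduct.prodRight R R M ↥A ↥B with he
  set w := e.symm (wA, wB) with hw
  have hproj1 : ∀ z : M ⊗[R] (↥A × ↥B), lTensor M (LinearMap.fst R ↥A ↥B) z = (e z).1 := by
    intro z
    induction z with
    | zero => simp
    | tmul m ab => obtain ⟨a, b⟩ := ab; simp [he]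
    | add z1 z2 h1 h2 => simp [map_add, h1, h2]
  have hproj2 : ∀ z : M ⊗[R] (↥A × ↥B), lTensor M (LinearMap.snd R ↥A ↥B) z = (e z).2 := by
    intro z
    induction z with
    | zero => simp
    | tmul m ab => obtain ⟨a, b⟩ := ab; simp [he]
    | add z1 z2 h1 h2 => simp [map_add, h1, h2]
  have hfst : lTensor M (LinearMap.fst R ↥A ↥B) w = wA := by
    rw [hproj1 w, hw, e.apply_symm_apply]
  have hsnd : lTensor M (LinearMap.snd R ↥A ↥B) w = wB := by
    rw [hproj2 w, hw, e.apply_symm_apply]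
  have hδw : lTensor M δ w = 0 := by
    have hsub : lTensor M δ w =
        lTensor M A.subtype (lTensor M (LinearMap.fst R ↥A ↥B) w) -
        lTensor M B.subtype (lTensor M (LinearMap.snd R ↥A ↥B) w) := by
      rw [hδ]
      rw [lTensor_sub]
      simp [lTensor_comp]
    have hA : lTensor M A.subtype wA = (TensorProduct.piScalarRight R R M κ).symm x := by
      rw [LinearEquiv.eq_symm_apply]
      exact hwA
    have hB : lTensor M B.subtype wB = (TensorProduct.piScalarRight R R M κ).symm x := by
      rw [LinearEquiv.eq_symm_apply]
      exact hwB
    rw [hsub, hfst, hsnd, hA, hB, sub_self]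
  obtain ⟨v, hv⟩ := (hT w).mp hδw
  have hvA : lTensor M (Submodule.inclusion (inf_le_left : A ⊓ B ≤ A)) v = wA := by
    rw [← hfst, ← hv, ← lTensor_comp_apply]
    congr 1
  refine ⟨v, ?_⟩
  have hsubty : (A ⊓ B).subtype = A.subtype ∘ₗ Submodule.inclusion inf_le_left := by
    ext c; rfl
  rw [rho, LinearMap.comp_apply, hsubty, lTensor_comp, LinearMap.comp_apply, hvA]
  exact hwA

theorem range_piMap (φ : (ι → R) →ₗ[R] (κ → R)) :
    LinearMap.range (piMap M φ) = tsub M (LinearMap.range φ) := by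
  apply le_antisymm
  · rintro _ ⟨m, rfl⟩
    have h2 : piMap M φ m = ∑ i, (fun k => φ (Pi.single i 1) k • m i) := by
      funext k
      rw [piMap_apply]
      rw [Finset.sum_apply]
  -- note: goal now closed by rfl of sums? ensure
    rw [h2]
    exact Submodule.sum_mem _ fun i _ => gen_mem_tsub (LinearMap.mem_range_self φ _) (m i)
  · rw [tsub, Submodule.span_le]
    rintro x hx
    obtain ⟨q, hq, m, rfl⟩ := hx
    obtain ⟨c, rfl⟩ := hq
    rw [SetLike.mem_coe]
    have h3 := piMap_smul_vec (M := M) φ c m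
    exact LinearMap.mem_range.mpr ⟨_, h3⟩

theorem arm {ι κ : Type} [Fintype ι] [DecidableEq ι] [Fintype κ] [DecidableEq κ]
    [IsNoetherianRing R] [Module.Flat R M] (φ : (ι → R) →ₗ[R] (κ → R)) :
    ∃ k : ℕ, ∀ n : ℕ, (I ^ (n + k) • ⊤ : Submodule R (κ → M)) ⊓ LinearMap.range (piMap M φ) ≤
      I ^ n • LinearMap.range (piMap M φ) := by
  obtain ⟨k, hk⟩ := Ideal.exists_pow_inf_eq_pow_smul (M := κ → R) I (LinearMap.range φ)
  refine ⟨k, fun n => ?_⟩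
  calc (I ^ (n + k) • ⊤ : Submodule R (κ → M)) ⊓ LinearMap.range (piMap M φ)
      ≤ tsub M (I ^ (n + k) • (⊤ : Submodule R (κ → R))) ⊓ tsub M (LinearMap.range φ) :=
        inf_le_inf (top_smul_le_tsub _) (le_of_eq (range_piMap φ))
    _ ≤ tsub M ((I ^ (n + k) • ⊤ : Submodule R (κ → R)) ⊓ LinearMap.range φ) := tsub_inf_le _ _
    _ ≤ I ^ n • tsub M (LinearMap.range φ) := by
        rw [hk (n + k) (by omega), show n + k - k = n from by omega]
        refine le_trans (tsub_smul_le _ _) ?_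
        exact Submodule.smul_mono le_rfl (tsub_mono inf_le_right)
    _ = I ^ n • LinearMap.range (piMap M φ) := by rw [range_piMap]

end Tsub

section Exactness

variable {M : Type*} [AddCommGroup M] [Module R M]

theorem piMap_exact [Module.Flat R M] {ι κ lam : Type*}
    [Fintype ι] [DecidableEq ι] [Fintype κ] [DecidableEq κ] [Fintype lam] [DecidableEq lam]
    {u : (ι → R) →ₗ[R] (κ → R)} {g : (κ → R) →ₗ[R] (lam → R)} (hug : Function.Exact u g) :
    Function.Exact (piMap M u) (piMap M g) := by
  intro y
  constructor
  · intro hy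
    set e := TensorProduct.piScalarRight R R M κ with he
    have h0 : lTensor M g (e.symm y) = 0 := by
      apply (TensorProduct.piScalarRight R R M lam).injective
      rw [piScalarRight_naturality, he, e.apply_symm_apply, hy, map_zero]
    obtain ⟨v, hv⟩ := ((Module.Flat.lTensor_exact M hug) (e.symm y)).mp h0
    refine ⟨TensorProduct.piScalarRight R R M ι v, ?_⟩
    rw [← piScalarRight_naturality, hv, he, e.apply_symm_apply]
  · rintro ⟨v, rfl⟩
    obtain ⟨w0, rfl⟩ := (TensorProduct.piScalarRight R R M ι).surjective v
    rw [← piScalarRight_naturality, ← piScalarRight_naturality, ← lTensor_comp_apply,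
      hug.linearMap_comp_eq_zero]
    simp

theorem flat_adicCompletion [IsNoetherianRing R] [Module.Flat R M] :
    Module.Flat R (AdicCompletion I M) := by
  rw [Module.Flat.iff_lTensor_injective']
  intro J
  rw [injective_iff_map_eq_zero]
  intro z hz
  haveI : Module.Finite R J := Module.Finite.iff_fg.mpr (IsNoetherian.noetherian J)
  obtain ⟨r, p, hp⟩ := Module.Finite.exists_fin' R J
  set pi1 : R →ₗ[R] (Fin 1 → R) := LinearMap.pi fun _ : Fin 1 => LinearMap.id with hpi1
  set g : (Fin r → R) →ₗ[R] (Fin 1 → R) := pi1 ∘ₗ (J.subtype ∘ₗ p) with hgdef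
  haveI : Module.Finite R (LinearMap.ker g) :=
    Module.Finite.iff_fg.mpr (IsNoetherian.noetherian _)
  obtain ⟨s, q, hq⟩ := Module.Finite.exists_fin' R (LinearMap.ker g)
  set u : (Fin s → R) →ₗ[R] (Fin r → R) := (LinearMap.ker g).subtype ∘ₗ q with hudef
  have hug : Function.Exact u g := by
    rw [LinearMap.exact_iff, hudef, LinearMap.range_comp, LinearMap.range_eq_top.mpr hq,
      Submodule.map_top, Submodule.range_subtype]
  obtain ⟨w, hw⟩ := lTensor_surjective (AdicCompletion I M) hp z
  have hgz : lTensor (AdicCompletion I M) g w = 0 := by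
    rw [hgdef, lTensor_comp, lTensor_comp, LinearMap.comp_apply, LinearMap.comp_apply,
      hw, hz, map_zero]
  have hMexact : Function.Exact (piMap M u) (piMap M g) := piMap_exact hug
  obtain ⟨kf, hkf⟩ := arm I (M := M) u
  obtain ⟨kg, hkg⟩ := arm I (M := M) g
  have hker : AdicCompletion.map I (piMap M g) (theta I M w) = 0 := by
    rw [← theta_naturality, hgz, map_zero]
  have hcore := key I hMexact (k := max kf kg) ?hf ?hg (theta I M w) hker
  case hf =>
    intro n
    refine le_trans (inf_le_inf_right _
      (Submodule.smul_mono_left (Ideal.pow_le_pow_right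
        (Nat.add_le_add_left (le_max_left kf kg) n)))) ?_
    refine le_trans (hkf n) (le_of_eq ?_)
    rw [Submodule.map_smul'', Submodule.map_top]
  case hg =>
    intro n y hy
    have h1 : piMap M g y ∈ (I ^ (n + kg) • ⊤ : Submodule R (Fin 1 → M)) ⊓
        LinearMap.range (piMap M g) :=
      ⟨mem_of_le I (Nat.add_le_add_left (le_max_right kf kg) n) hy, ⟨y, rfl⟩⟩
    have h2 := hkg n h1
    rw [← Submodule.map_top, ← Submodule.map_smul''] at h2
    obtain ⟨d, hd, hdy⟩ := h2
    exact ⟨d, hd, hdy⟩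
  obtain ⟨y, hy⟩ := hcore
  set v := thetaInv I M y with hv
  have hytheta : theta I M v = y := theta_thetaInv I y
  have hwv : w = lTensor (AdicCompletion I M) u v := by
    have hinj : Function.Injective (theta I M (ι := Fin r)) := fun a b h => by
      rw [← thetaInv_theta I a, ← thetaInv_theta I b, h]
    apply hinj
    rw [theta_naturality, hytheta, hy]
  have hkerg : LinearMap.ker g = LinearMap.ker p := by
    ext x
    simp [hgdef, hpi1, LinearMap.mem_ker, funext_iff]
  have hpu : p ∘ₗ u = 0 := by
    refine LinearMap.ext fun a => ?_
    have hm : u a ∈ LinearMap.ker g := by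
      rw [hudef]
      exact SetLike.coe_mem (q a)
    rw [hkerg] at hm
    simpa using hm
  rw [← hw, hwv, ← lTensor_comp_apply, hpu, lTensor_zero]
  simp

end Exactness

end FlatCompletionAux

/-- Let `B` be a Noetherian local commutative ring with maximal ideal `n`,
and let `M` be a `B`-module that is flat over `B`. Then the `n`-adic separated completion
of `M` (the inverse limit of the modules `M ⧸ n ^ i • M`) is also a flat `B`-module. -/
theorem flat_of_adicCompletion_of_flat (B : Type*) [CommRing B] [IsNoetherianRing B]
    [IsLocalRing B] (M : Type*) [AddCommGroup M] [Module B M] [Module.Flat B M] :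
    Module.Flat B (AdicCompletion (IsLocalRing.maximalIdeal B) M) := by
  exact FlatCompletionAux.flat_adicCompletion (IsLocalRing.maximalIdeal B)
end

section
/- Let A and B be commutative rings containing a field k, with Jacobson radicals m and n respectively, let C = A⊗_k B, r = m⊗_k B + A⊗_k n, and let E = A⊗̂_k B be the r-adic separated completion of C. If m and n are finitely generated ideals, then the closure r̂ of the image of r in E equals the extended ideal rE, and the topology of E (given by the closures of the powers r^i) coincides with the rE-adic topology, i.e. the closure of the image of r^i in E equals r^i·E for every i. -/
open TensorProduct

/-- The ideal `r = m ⊗ B + A ⊗ n` of `C = A ⊗[k] B`, where `m` and `n` are the Jacobson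
radicals of `A` and `B` (for a local ring, the Jacobson radical is the maximal ideal). -/
noncomputable def tensorRadical (k A B : Type*) [Field k] [CommRing A] [CommRing B]
    [Algebra k A] [Algebra k B] : Ideal (A ⊗[k] B) :=
  Ideal.map (Algebra.TensorProduct.includeLeft (R := k) (S := k) (A := A) (B := B))
      ((⊥ : Ideal A).jacobson) ⊔
    Ideal.map (Algebra.TensorProduct.includeRight (R := k) (A := A) (B := B))
      ((⊥ : Ideal B).jacobson)

/-- The completed tensor product `A ⊗̂[k] B`: the `r`-adic separated completion of
`C = A ⊗[k] B`, i.e. the inverse limit of the rings `C ⧸ r ^ i`. -/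
noncomputable abbrev CompletedTensor (k A B : Type*) [Field k] [CommRing A] [CommRing B]
    [Algebra k A] [Algebra k B] : Type _ :=
  AdicCompletion (tensorRadical k A B) (A ⊗[k] B)

open AdicCompletion in
theorem ker_evalₐ_eq_map {R : Type*} [CommRing R] (I : Ideal R) (n : ℕ)
    (h : (I ^ n).FG) :
    RingHom.ker (AdicCompletion.evalₐ I n) =
      Ideal.map (algebraMap R (AdicCompletion I R)) (I ^ n) := by
  have hsmul : ∀ m : ℕ, (I ^ m • ⊤ : Ideal R) = I ^ m := fun m => by ext x; simp
  apply le_antisymm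
  · intro x hx
    obtain ⟨f, rfl⟩ := AdicCompletion.mk_surjective I R x
    rw [RingHom.mem_ker, evalₐ_mk, Ideal.Quotient.eq_zero_iff_mem] at hx
    obtain ⟨s, hs⟩ := h
    set g : {a : R // a ∈ s} → R := fun j => (j : R) with hg
    have hspan : Submodule.span R (Set.range g) = I ^ n := by
      rw [hg, Subtype.range_coe_subtype]
      simpa using hs
    -- initial coefficients
    have h0 : (f n : R) ∈ Submodule.span R (Set.range g) := hspan ▸ hx
    rw [Finsupp.mem_span_range_iff_exists_finsupp] at h0
    obtain ⟨d0, hd0⟩ := h0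
    have hd0' : ∑ j, d0 j * g j = (f n : R) := by
      rw [← hd0, Finsupp.sum_fintype]
      · rfl
      · intro i; simp
    -- successive differences lie in I^m • span
    have hdiff : ∀ m : ℕ, (f (n + m + 1) : R) - f (n + m) ∈
        I ^ m • Submodule.span R (Set.range g) := by
      intro m
      have hmem : (f (n + m + 1) : R) - f (n + m) ∈ (I ^ (n + m) • ⊤ : Submodule R R) := by
        have := (f.property (Nat.le_succ (n + m))).symm
        rw [SModEq.sub_mem] at this
        exact this
      rw [hsmul] at hmem
      have heq : (I ^ (n + m) : Ideal R) = I ^ m * I ^ n := by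
        rw [← pow_add]; ring_nf
      rw [heq] at hmem
      rw [hspan, Ideal.smul_eq_mul]
      exact hmem
    choose c hc hcsum using fun m =>
      (Submodule.mem_ideal_smul_span_iff_exists_sum (I ^ m) g _).mp (hdiff m)
    have hcsum' : ∀ m : ℕ, ∑ j, c m j * g j = (f (n + m + 1) : R) - f (n + m) := by
      intro m
      rw [← hcsum m, Finsupp.sum_fintype]
      · rfl
      · intro i; simp
    -- partial-sum coefficient sequences
    set y : {a : R // a ∈ s} → ℕ → R :=
      fun j m => d0 j + ∑ p ∈ Finset.range m, c p j with hy
    -- key identity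
    have hkey : ∀ m : ℕ, (f (n + m) : R) = ∑ j, y j m * g j := by
      intro m
      induction m with
      | zero =>
        simp only [hy, Finset.range_zero, Finset.sum_empty, add_zero, Nat.add_zero]
        exact hd0'.symm
      | succ m ih =>
        have hstep : (f (n + (m + 1)) : R) =
            f (n + m) + ∑ j, c m j * g j := by
          rw [hcsum' m]; ring
        rw [hstep, ih, ← Finset.sum_add_distrib]
        apply Finset.sum_congr rfl
        intro j _
        rw [hy]
        simp only [Finset.sum_range_succ]
        ring
    -- the coefficient sequences are Cauchy
    have hcauchy : ∀ j, ∀ m : ℕ, y j m ≡ y j (m + 1) [SMOD (I ^ m • ⊤ : Submodule R R)] := by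
      intro j m
      rw [SModEq.sub_mem, hsmul]
      have : y j m - y j (m + 1) = -(c m j) := by
        rw [hy]; simp [Finset.sum_range_succ]
      rw [this]
      exact neg_mem (hc m j)
    set Y : {a : R // a ∈ s} → AdicCauchySequence I R :=
      fun j => AdicCauchySequence.mk I R (y j) (hcauchy j) with hY
    -- the element as a combination
    have hfin : AdicCompletion.mk I R f =
        ∑ j, algebraMap R (AdicCompletion I R) (g j) * AdicCompletion.mk I R (Y j) := by
      apply AdicCompletion.ext
      intro m
      rw [AdicCompletion.val_sum]
      have hval : ∀ j, (algebraMap R (AdicCompletion I R) (g j) *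
          AdicCompletion.mk I R (Y j)).val m =
          Submodule.mkQ (I ^ m • ⊤ : Submodule R R) (g j * y j m) := by
        intro j
        rfl
      simp only [Finset.sum_apply, hval]
      have h1 : (AdicCompletion.mk I R f).val m =
          Submodule.mkQ (I ^ m • ⊤ : Submodule R R) (f m) := rfl
      rw [h1, ← map_sum]
      have h2 : ∑ j, g j * y j m = (f (n + m) : R) := by
        rw [hkey m]
        exact Finset.sum_congr rfl fun j _ => mul_comm _ _
      rw [h2]
      have := f.property (Nat.le_add_left m n)
      rw [SModEq] at this
      simpa using this
    rw [hfin]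
    apply Ideal.sum_mem
    intro j _
    apply Ideal.mul_mem_right
    apply Ideal.mem_map_of_mem
    rw [← hspan]
    exact Submodule.subset_span ⟨j, rfl⟩
  · rw [Ideal.map_le_iff_le_comap]
    intro a ha
    rw [Ideal.mem_comap, RingHom.mem_ker, AlgHom.commutes,
      Ideal.Quotient.algebraMap_eq, Ideal.Quotient.eq_zero_iff_mem]
    exact ha

/-- With `C = A ⊗[k] B`, `r = m ⊗ B + A ⊗ n` (`m`, `n` the Jacobson
radicals of `A`, `B`) and `E = A ⊗̂[k] B` the `r`-adic completion of `C`: if `m` and `n`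
are finitely generated, then the closure `r̂` of the image of `r` in `E` (the kernel of
the canonical map `E → C ⧸ r`) equals the extended ideal `rE`, and more generally the
closure of the image of `r ^ i` in `E` (the kernel of `E → C ⧸ r ^ i`) equals `r ^ i · E`
for every `i`; i.e. the topology of `E` is the `rE`-adic topology. -/
theorem closure_tensorRadical_pow_eq_map (k A B : Type*) [Field k]
    [CommRing A] [CommRing B] [Algebra k A] [Algebra k B]
    (hm : ((⊥ : Ideal A).jacobson).FG) (hn : ((⊥ : Ideal B).jacobson).FG) :
    RingHom.ker (AdicCompletion.evalₐ (tensorRadical k A B) 1) =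
        Ideal.map (algebraMap (A ⊗[k] B) (CompletedTensor k A B)) (tensorRadical k A B) ∧
      ∀ i : ℕ,
        RingHom.ker (AdicCompletion.evalₐ (tensorRadical k A B) i) =
          Ideal.map (algebraMap (A ⊗[k] B) (CompletedTensor k A B))
            (tensorRadical k A B ^ i) := by
  have hr : (tensorRadical k A B).FG := by
    apply Submodule.FG.sup
    · exact hm.map _
    · exact hn.map _
  have hmain : ∀ i : ℕ,
      RingHom.ker (AdicCompletion.evalₐ (tensorRadical k A B) i) =
        Ideal.map (algebraMap (A ⊗[k] B) (CompletedTensor k A B))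
          (tensorRadical k A B ^ i) := fun i =>
    ker_evalₐ_eq_map (tensorRadical k A B) i (Submodule.FG.pow hr i)
  exact ⟨(hmain 1).trans (congrArg _ (pow_one _)), hmain⟩
end

section
/- Let A and B be two semilocal Noetherian commutative rings containing a field k, with maximal ideals m_1,…,m_p of A and n_1,…,n_q of B. Then the completed tensor product A⊗̂_k B is isomorphic as a ring to the finite product over all pairs (r,s) of the completed tensor products A_{m_r} ⊗̂_k B_{n_s}, where A_{m_r} and B_{n_s} denote the localizations of A and B at m_r and n_s. -/
open TensorProduct

set_option maxHeartbeats 1000000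
set_option synthInstance.maxHeartbeats 200000



namespace CTAux

variable {A : Type*} [CommRing A]

/-- The contraction to `A` of the `n`-th power of the maximal ideal of the localization
of `A` at the maximal ideal `r`. -/
noncomputable def qIdeal (n : ℕ) (r : MaximalSpectrum A) : Ideal A :=
  Ideal.comap (algebraMap A (Localization.AtPrime r.asIdeal))
    ((IsLocalRing.maximalIdeal (Localization.AtPrime r.asIdeal)) ^ n)

lemma mem_jac_iff {x : A} :
    x ∈ (⊥ : Ideal A).jacobson ↔ ∀ r : MaximalSpectrum A, x ∈ r.asIdeal := by
  constructor
  · intro h r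
    exact Ideal.mem_sInf.mp h ⟨bot_le, r.2⟩
  · intro h
    exact Ideal.mem_sInf.mpr fun I hI => h ⟨I, hI.2⟩

variable [Finite (MaximalSpectrum A)]
set_option linter.unusedSectionVars false

lemma exists_avoid (r : MaximalSpectrum A) :
    ∃ u : A, u ∉ r.asIdeal ∧ ∀ t : MaximalSpectrum A, t ≠ r → u ∈ t.asIdeal := by
  classical
  cases nonempty_fintype (MaximalSpectrum A)
  have hP : r.asIdeal.IsPrime := r.2.isPrime
  have hle : ¬ ((Finset.univ.erase r).inf
      (fun t : MaximalSpectrum A => t.asIdeal) ≤ r.asIdeal) := by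
    intro h
    obtain ⟨t, ht, hle⟩ := (Ideal.IsPrime.inf_le' hP).mp h
    have : t.asIdeal = r.asIdeal := t.2.eq_of_le r.2.ne_top hle
    exact (Finset.mem_erase.mp ht).1 (MaximalSpectrum.ext this)
  obtain ⟨u, hu1, hu2⟩ := SetLike.not_le_iff_exists.mp hle
  refine ⟨u, hu2, fun t ht => ?_⟩
  exact Finset.inf_le (f := fun t : MaximalSpectrum A => t.asIdeal)
    (Finset.mem_erase.mpr ⟨ht, Finset.mem_univ t⟩) hu1

lemma map_jacobson (r : MaximalSpectrum A) :
    Ideal.map (algebraMap A (Localization.AtPrime r.asIdeal)) ((⊥ : Ideal A).jacobson) =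
      IsLocalRing.maximalIdeal (Localization.AtPrime r.asIdeal) := by
  have hP : r.asIdeal.IsPrime := r.2.isPrime
  apply le_antisymm
  · rw [← Localization.AtPrime.map_eq_maximalIdeal]
    exact Ideal.map_mono (fun x hx => mem_jac_iff.mp hx r)
  · rw [← Localization.AtPrime.map_eq_maximalIdeal, Ideal.map_le_iff_le_comap]
    intro x hx
    obtain ⟨u, hu1, hu2⟩ := exists_avoid r
    have hux : u * x ∈ (⊥ : Ideal A).jacobson := by
      rw [mem_jac_iff]
      intro t
      by_cases ht : t = r
      · subst ht; exact Ideal.mul_mem_left _ _ hx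
      · exact Ideal.mul_mem_right _ _ (hu2 t ht)
    have hmem : algebraMap A (Localization.AtPrime r.asIdeal) (u * x) ∈
        Ideal.map (algebraMap A (Localization.AtPrime r.asIdeal)) ((⊥ : Ideal A).jacobson) :=
      Ideal.mem_map_of_mem _ hux
    rw [map_mul] at hmem
    have hunit : IsUnit (algebraMap A (Localization.AtPrime r.asIdeal) u) :=
      IsLocalization.map_units _ (⟨u, hu1⟩ : r.asIdeal.primeCompl)
    rw [Ideal.mem_comap]
    exact (Ideal.unit_mul_mem_iff_mem _ hunit).mp hmem

lemma pow_jac_le_q (n : ℕ) (r : MaximalSpectrum A) :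
    ((⊥ : Ideal A).jacobson) ^ n ≤ qIdeal n r := by
  rw [qIdeal, ← Ideal.map_le_iff_le_comap, Ideal.map_pow, map_jacobson]

lemma pow_asIdeal_le_q (n : ℕ) (r : MaximalSpectrum A) :
    r.asIdeal ^ n ≤ qIdeal n r := by
  have hP : r.asIdeal.IsPrime := r.2.isPrime
  rw [qIdeal, ← Ideal.map_le_iff_le_comap, Ideal.map_pow,
    Localization.AtPrime.map_eq_maximalIdeal]

lemma q_le_asIdeal {n : ℕ} (hn : 0 < n) (r : MaximalSpectrum A) :
    qIdeal n r ≤ r.asIdeal := by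
  have hP : r.asIdeal.IsPrime := r.2.isPrime
  rw [qIdeal]
  refine le_trans (Ideal.comap_mono (Ideal.pow_le_self hn.ne')) ?_
  exact Localization.AtPrime.comap_maximalIdeal.le

lemma eq_of_q_le_maximal {n : ℕ} (hn : 0 < n) (r : MaximalSpectrum A) {P : Ideal A}
    (hP : P.IsMaximal) (h : qIdeal n r ≤ P) : P = r.asIdeal := by
  have hPp : P.IsPrime := hP.isPrime
  have hJ : ((⊥ : Ideal A).jacobson) ≤ P := by
    have := le_trans (pow_jac_le_q n r) h
    exact (hPp.pow_le_iff hn.ne').mp this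
  classical
  cases nonempty_fintype (MaximalSpectrum A)
  have hinf : (Finset.univ.inf (fun t : MaximalSpectrum A => t.asIdeal)) ≤ P := by
    refine le_trans ?_ hJ
    intro x hx
    rw [mem_jac_iff]
    exact fun t => Finset.inf_le (f := fun t : MaximalSpectrum A => t.asIdeal) (Finset.mem_univ t) hx
  obtain ⟨t, _, hle⟩ := (Ideal.IsPrime.inf_le' hPp).mp hinf
  have hPt : P = t.asIdeal := (t.2.eq_of_le hP.ne_top hle).symm
  by_cases htr : t = r
  · rw [hPt, htr]
  · exfalso
    obtain ⟨u, hu1, hu2⟩ := exists_avoid t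
    have hun : u ^ n ∈ qIdeal n r := pow_asIdeal_le_q n r (Ideal.pow_mem_pow (hu2 r (fun h => htr h.symm)) n)
    have : u ^ n ∈ t.asIdeal := hPt ▸ h hun
    exact hu1 (t.2.isPrime.mem_of_pow_mem n this)

lemma exists_inv_mod_q {n : ℕ} (hn : 0 < n) (r : MaximalSpectrum A) {s : A}
    (hs : s ∉ r.asIdeal) : ∃ a : A, a * s - 1 ∈ qIdeal n r := by
  have htop : Ideal.span {s} ⊔ qIdeal n r = ⊤ := by
    by_contra h
    obtain ⟨P, hP, hle⟩ := Ideal.exists_le_maximal _ h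
    have hPr : P = r.asIdeal := eq_of_q_le_maximal hn r hP (le_trans le_sup_right hle)
    have hsmem : s ∈ Ideal.span {s} ⊔ qIdeal n r :=
      Ideal.mem_sup_left (Ideal.mem_span_singleton'.mpr ⟨1, one_mul s⟩)
    exact hs (hPr ▸ hle hsmem)
  have h1 : (1 : A) ∈ Ideal.span {s} ⊔ qIdeal n r := htop ▸ Submodule.mem_top
  obtain ⟨y, hy, z, hz, hyz⟩ := Submodule.mem_sup.mp h1
  obtain ⟨a, ha⟩ := Ideal.mem_span_singleton'.mp hy
  refine ⟨a, ?_⟩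
  have : a * s - 1 = -z := by rw [ha, ← hyz]; ring
  rw [this]
  exact neg_mem hz

lemma exists_partition {n : ℕ} (hn : 0 < n) :
    ∃ e : MaximalSpectrum A → A, (∀ r, e r - 1 ∈ qIdeal n r) ∧
      (∀ r t, t ≠ r → e r ∈ qIdeal n t) := by
  classical
  cases nonempty_fintype (MaximalSpectrum A)
  have key : ∀ r : MaximalSpectrum A, ∃ e : A, e - 1 ∈ qIdeal n r ∧
      ∀ t, t ≠ r → e ∈ qIdeal n t := by
    intro r
    have htop : qIdeal n r ⊔ (Finset.univ.erase r).inf (qIdeal n) = ⊤ := by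
      by_contra h
      obtain ⟨P, hP, hle⟩ := Ideal.exists_le_maximal _ h
      have hPr : P = r.asIdeal := eq_of_q_le_maximal hn r hP (le_trans le_sup_left hle)
      have hinf : (Finset.univ.erase r).inf (qIdeal n) ≤ P := le_trans le_sup_right hle
      obtain ⟨t, ht, hle'⟩ := (Ideal.IsPrime.inf_le' hP.isPrime).mp hinf
      have hPt : P = t.asIdeal := eq_of_q_le_maximal hn t hP hle'
      exact (Finset.mem_erase.mp ht).1 (MaximalSpectrum.ext (hPt ▸ hPr : t.asIdeal = r.asIdeal))
    have h1 : (1 : A) ∈ qIdeal n r ⊔ (Finset.univ.erase r).inf (qIdeal n) :=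
      htop ▸ Submodule.mem_top
    obtain ⟨z, hz, y, hy, hyz⟩ := Submodule.mem_sup.mp h1
    refine ⟨y, ?_, fun t ht => ?_⟩
    · have : y - 1 = -z := by rw [← hyz]; ring
      rw [this]; exact neg_mem hz
    · exact Finset.inf_le (f := qIdeal n) (Finset.mem_erase.mpr ⟨ht, Finset.mem_univ t⟩) hy
  choose e he1 he2 using key
  exact ⟨e, he1, he2⟩

lemma mem_pow_jac {n : ℕ} {x : A} (h : ∀ r : MaximalSpectrum A, x ∈ qIdeal n r) :
    x ∈ ((⊥ : Ideal A).jacobson) ^ n := by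
  apply Ideal.mem_of_localization_maximal
  intro P hP
  have hx := h ⟨P, hP⟩
  rw [Ideal.map_pow, map_jacobson ⟨P, hP⟩]
  exact hx

end CTAux

namespace CTAux

section Kernel

variable {k : Type*} [Field k]
variable {A A' B B' : Type*} [CommRing A] [CommRing A'] [CommRing B] [CommRing B']
  [Algebra k A] [Algebra k A'] [Algebra k B] [Algebra k B']

lemma kernel_left (f : A →ₐ[k] A') (S : Submonoid A)
    (hker : ∀ a : A, f a = 0 → ∃ s ∈ S, s * a = 0) (y : A ⊗[k] B)
    (hy : Algebra.TensorProduct.map f (AlgHom.id k B) y = 0) :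
    ∃ s ∈ S, ((s : A) ⊗ₜ[k] (1 : B)) * y = 0 := by
  classical
  set b := Module.Basis.ofVectorSpace k B with hb
  set ι := Module.Basis.ofVectorSpaceIndex k B
  set ε : A ⊗[k] B ≃ₗ[k] (ι →₀ A) :=
    (LinearEquiv.lTensor A b.repr).trans (TensorProduct.finsuppScalarRight k k A ι) with hε
  set ε' : A' ⊗[k] B ≃ₗ[k] (ι →₀ A') :=
    (LinearEquiv.lTensor A' b.repr).trans (TensorProduct.finsuppScalarRight k k A' ι) with hε'
  have hcomm : ∀ (y : A ⊗[k] B) (i : ι),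
      ε' (Algebra.TensorProduct.map f (AlgHom.id k B) y) i = f (ε y i) := by
    intro y i
    induction y with
    | zero => simp
    | add y₁ y₂ h₁ h₂ => simp [map_add, Finsupp.add_apply, h₁, h₂]
    | tmul a bb =>
      simp only [hε, hε', Algebra.TensorProduct.map_tmul, AlgHom.coe_id, id_eq,
        LinearEquiv.trans_apply, LinearEquiv.lTensor_tmul,
        TensorProduct.finsuppScalarRight_apply_tmul_apply]
      rw [map_smul]
  have hsmul : ∀ (s : A) (y : A ⊗[k] B) (i : ι),
      ε ((s ⊗ₜ[k] (1 : B)) * y) i = s * ε y i := by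
    intro s y i
    induction y with
    | zero => simp
    | add y₁ y₂ h₁ h₂ => simp [mul_add, map_add, Finsupp.add_apply, h₁, h₂, mul_add]
    | tmul a bb =>
      rw [Algebra.TensorProduct.tmul_mul_tmul, one_mul]
      simp only [hε, LinearEquiv.trans_apply, LinearEquiv.lTensor_tmul,
        TensorProduct.finsuppScalarRight_apply_tmul_apply]
      rw [mul_smul_comm]
  have hker' : ∀ i : ι, f (ε y i) = 0 := by
    intro i
    rw [← hcomm y i, hy, map_zero]
    simp
  choose sel hsel1 hsel2 using fun i : ι => hker (ε y i) (hker' i)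
  set s : A := ∏ i ∈ (ε y).support, sel i with hs
  have hsS : s ∈ S := Submonoid.prod_mem S (fun i _ => hsel1 i)
  refine ⟨s, hsS, ?_⟩
  have : ε ((s ⊗ₜ[k] (1 : B)) * y) = 0 := by
    ext i
    rw [hsmul]
    by_cases hi : i ∈ (ε y).support
    · rw [hs, ← Finset.mul_prod_erase _ _ hi, mul_comm (sel i), mul_assoc, hsel2 i]
      simp
    · rw [Finsupp.notMem_support_iff.mp hi, mul_zero]
      simp
  have h0 : ε ((s ⊗ₜ[k] (1 : B)) * y) = ε 0 := by simpa using this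
  exact ε.injective h0

lemma kernel_right (g : B →ₐ[k] B') (T : Submonoid B)
    (hker : ∀ bb : B, g bb = 0 → ∃ t ∈ T, t * bb = 0) (y : A ⊗[k] B)
    (hy : Algebra.TensorProduct.map (AlgHom.id k A) g y = 0) :
    ∃ t ∈ T, ((1 : A) ⊗ₜ[k] (t : B)) * y = 0 := by
  have hnat : ∀ z : A ⊗[k] B, Algebra.TensorProduct.map g (AlgHom.id k A)
      ((Algebra.TensorProduct.comm k A B) z) =
      (Algebra.TensorProduct.comm k A B') (Algebra.TensorProduct.map (AlgHom.id k A) g z) := by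
    intro z
    induction z with
    | zero => simp
    | add z₁ z₂ h₁ h₂ => simp [map_add, h₁, h₂]
    | tmul a bb => simp
  have hnat := hnat y
  rw [hy, map_zero] at hnat
  obtain ⟨t, htT, ht⟩ := kernel_left g T hker ((Algebra.TensorProduct.comm k A B) y) hnat
  refine ⟨t, htT, ?_⟩
  have : (Algebra.TensorProduct.comm k A B) (((1 : A) ⊗ₜ[k] (t : B)) * y) = 0 := by
    rw [map_mul, Algebra.TensorProduct.comm_tmul]
    exact ht
  have h0 : (Algebra.TensorProduct.comm k A B) (((1 : A) ⊗ₜ[k] (t : B)) * y) =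
      (Algebra.TensorProduct.comm k A B) 0 := by simpa using this
  exact (Algebra.TensorProduct.comm k A B).injective h0

end Kernel

end CTAux
namespace CTAux

section Tensor

variable (k : Type*) [Field k] {A B : Type*} [CommRing A] [CommRing B]
  [Algebra k A] [Algebra k B]

/-- The canonical map `A ⊗[k] B →ₐ[k] A_m ⊗[k] B_n`. -/
noncomputable def locMap (p : MaximalSpectrum A × MaximalSpectrum B) :
    A ⊗[k] B →ₐ[k]
      Localization.AtPrime p.1.asIdeal ⊗[k] Localization.AtPrime p.2.asIdeal :=
  Algebra.TensorProduct.map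
    (IsScalarTower.toAlgHom k A (Localization.AtPrime p.1.asIdeal))
    (IsScalarTower.toAlgHom k B (Localization.AtPrime p.2.asIdeal))

lemma locMap_tmul (p : MaximalSpectrum A × MaximalSpectrum B) (a : A) (b : B) :
    locMap k p (a ⊗ₜ[k] b) =
      algebraMap A (Localization.AtPrime p.1.asIdeal) a ⊗ₜ[k]
        algebraMap B (Localization.AtPrime p.2.asIdeal) b := by
  simp [locMap]

variable {A' B' : Type*} [CommRing A'] [CommRing B'] [Algebra k A'] [Algebra k B']

lemma tmul_mem_radpow_left (n : ℕ) {a : A'} (ha : a ∈ ((⊥ : Ideal A').jacobson) ^ n)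
    (b : B') : a ⊗ₜ[k] b ∈ (tensorRadical k A' B') ^ n := by
  have h1 : (Algebra.TensorProduct.includeLeft (R := k) (S := k) (A := A') (B := B')) a ∈
      Ideal.map (Algebra.TensorProduct.includeLeft (R := k) (S := k) (A := A') (B := B'))
        (((⊥ : Ideal A').jacobson) ^ n) := Ideal.mem_map_of_mem _ ha
  rw [Ideal.map_pow, Algebra.TensorProduct.includeLeft_apply] at h1
  have h2 : (Ideal.map (Algebra.TensorProduct.includeLeft (R := k) (S := k) (A := A') (B := B'))
      ((⊥ : Ideal A').jacobson)) ^ n ≤ (tensorRadical k A' B') ^ n :=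
    Ideal.pow_right_mono le_sup_left n
  have h3 : a ⊗ₜ[k] b = ((1 : A') ⊗ₜ[k] b) * (a ⊗ₜ[k] (1 : B')) := by
    rw [Algebra.TensorProduct.tmul_mul_tmul, one_mul, mul_one]
  rw [h3]
  exact Ideal.mul_mem_left _ _ (h2 h1)

lemma tmul_mem_radpow_right (n : ℕ) {b : B'} (hb : b ∈ ((⊥ : Ideal B').jacobson) ^ n)
    (a : A') : a ⊗ₜ[k] b ∈ (tensorRadical k A' B') ^ n := by
  have h1 : (Algebra.TensorProduct.includeRight (R := k) (A := A') (B := B')) b ∈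
      Ideal.map (Algebra.TensorProduct.includeRight (R := k) (A := A') (B := B'))
        (((⊥ : Ideal B').jacobson) ^ n) := Ideal.mem_map_of_mem _ hb
  rw [Ideal.map_pow, Algebra.TensorProduct.includeRight_apply] at h1
  have h2 : (Ideal.map (Algebra.TensorProduct.includeRight (R := k) (A := A') (B := B'))
      ((⊥ : Ideal B').jacobson)) ^ n ≤ (tensorRadical k A' B') ^ n :=
    Ideal.pow_right_mono le_sup_right n
  have h3 : a ⊗ₜ[k] b = (a ⊗ₜ[k] (1 : B')) * ((1 : A') ⊗ₜ[k] b) := by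
    rw [Algebra.TensorProduct.tmul_mul_tmul, one_mul, mul_one]
  rw [h3]
  exact Ideal.mul_mem_left _ _ (h2 h1)

lemma jac_pow_loc {R : Type*} [CommRing R] (m : Ideal R) [m.IsPrime] (n : ℕ) :
    ((⊥ : Ideal (Localization.AtPrime m)).jacobson) ^ n =
      (IsLocalRing.maximalIdeal (Localization.AtPrime m)) ^ n := by
  rw [IsLocalRing.jacobson_eq_maximalIdeal _ bot_ne_top]

lemma left_mem_radpow_loc (p : MaximalSpectrum A × MaximalSpectrum B) {n : ℕ} {u : A}
    (hu : u ∈ qIdeal n p.1) (w : Localization.AtPrime p.2.asIdeal) :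
    (algebraMap A (Localization.AtPrime p.1.asIdeal) u) ⊗ₜ[k] w ∈
      (tensorRadical k (Localization.AtPrime p.1.asIdeal)
        (Localization.AtPrime p.2.asIdeal)) ^ n := by
  apply tmul_mem_radpow_left
  rw [jac_pow_loc]
  exact hu

lemma right_mem_radpow_loc (p : MaximalSpectrum A × MaximalSpectrum B) {n : ℕ} {v : B}
    (hv : v ∈ qIdeal n p.2) (w : Localization.AtPrime p.1.asIdeal) :
    w ⊗ₜ[k] (algebraMap B (Localization.AtPrime p.2.asIdeal) v) ∈
      (tensorRadical k (Localization.AtPrime p.1.asIdeal)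
        (Localization.AtPrime p.2.asIdeal)) ^ n := by
  apply tmul_mem_radpow_right
  rw [jac_pow_loc]
  exact hv

lemma locMap_tmul_mem_left (p : MaximalSpectrum A × MaximalSpectrum B) {n : ℕ} {u : A}
    (hu : u ∈ qIdeal n p.1) (v : B) :
    locMap k p (u ⊗ₜ[k] v) ∈
      (tensorRadical k (Localization.AtPrime p.1.asIdeal)
        (Localization.AtPrime p.2.asIdeal)) ^ n := by
  rw [locMap_tmul]
  exact left_mem_radpow_loc k p hu _

lemma locMap_tmul_mem_right (p : MaximalSpectrum A × MaximalSpectrum B) {n : ℕ} {v : B}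
    (hv : v ∈ qIdeal n p.2) (u : A) :
    locMap k p (u ⊗ₜ[k] v) ∈
      (tensorRadical k (Localization.AtPrime p.1.asIdeal)
        (Localization.AtPrime p.2.asIdeal)) ^ n := by
  rw [locMap_tmul]
  exact right_mem_radpow_loc k p hv _

lemma locMap_tmul_sub_one_mem (p : MaximalSpectrum A × MaximalSpectrum B) {n : ℕ}
    {u : A} {v : B} (hu : u - 1 ∈ qIdeal n p.1) (hv : v - 1 ∈ qIdeal n p.2) :
    locMap k p (u ⊗ₜ[k] v) - 1 ∈
      (tensorRadical k (Localization.AtPrime p.1.asIdeal)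
        (Localization.AtPrime p.2.asIdeal)) ^ n := by
  rw [locMap_tmul]
  set ru := algebraMap A (Localization.AtPrime p.1.asIdeal) u with hru
  set rv := algebraMap B (Localization.AtPrime p.2.asIdeal) v with hrv
  have hids : ru ⊗ₜ[k] rv - 1 = (ru - 1) ⊗ₜ[k] rv + (1 : Localization.AtPrime p.1.asIdeal)
      ⊗ₜ[k] (rv - 1) := by
    rw [sub_tmul, tmul_sub, Algebra.TensorProduct.one_def]
    abel
  rw [hids]
  apply add_mem
  · have h : ru - 1 = algebraMap A (Localization.AtPrime p.1.asIdeal) (u - 1) := by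
      rw [map_sub, map_one]
    rw [h]
    exact left_mem_radpow_loc k p hu _
  · have h : rv - 1 = algebraMap B (Localization.AtPrime p.2.asIdeal) (v - 1) := by
      rw [map_sub, map_one]
    rw [h]
    exact right_mem_radpow_loc k p hv _

lemma map_locMap_radical (p : MaximalSpectrum A × MaximalSpectrum B)
    [Finite (MaximalSpectrum A)] [Finite (MaximalSpectrum B)] :
    Ideal.map (locMap k p) (tensorRadical k A B) =
      tensorRadical k (Localization.AtPrime p.1.asIdeal)
        (Localization.AtPrime p.2.asIdeal) := by
  rw [tensorRadical, Ideal.map_sup]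
  congr 1
  · have h1 : Ideal.map (locMap k p)
        (Ideal.map (Algebra.TensorProduct.includeLeft (R := k) (S := k) (A := A) (B := B))
          ((⊥ : Ideal A).jacobson)) =
        Ideal.map ((locMap k p).toRingHom.comp
          (Algebra.TensorProduct.includeLeft (R := k) (S := k) (A := A) (B := B)).toRingHom)
          ((⊥ : Ideal A).jacobson) := Ideal.map_map _ _
    have hcomp : (locMap k p).toRingHom.comp
        (Algebra.TensorProduct.includeLeft (R := k) (S := k) (A := A) (B := B)).toRingHom =
        (Algebra.TensorProduct.includeLeft (R := k) (S := k)
          (A := Localization.AtPrime p.1.asIdeal)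
          (B := Localization.AtPrime p.2.asIdeal)).toRingHom.comp
          (algebraMap A (Localization.AtPrime p.1.asIdeal)) := by
      ext a
      simp [locMap]
    rw [h1, hcomp, ← Ideal.map_map, map_jacobson p.1]
    show _ = Ideal.map _ _
    rw [IsLocalRing.jacobson_eq_maximalIdeal _ bot_ne_top]
    rfl
  · have h1 : Ideal.map (locMap k p)
        (Ideal.map (Algebra.TensorProduct.includeRight (R := k) (A := A) (B := B))
          ((⊥ : Ideal B).jacobson)) =
        Ideal.map ((locMap k p).toRingHom.comp
          (Algebra.TensorProduct.includeRight (R := k) (A := A) (B := B)).toRingHom)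
          ((⊥ : Ideal B).jacobson) := Ideal.map_map _ _
    have hcomp : (locMap k p).toRingHom.comp
        (Algebra.TensorProduct.includeRight (R := k) (A := A) (B := B)).toRingHom =
        (Algebra.TensorProduct.includeRight (R := k)
          (A := Localization.AtPrime p.1.asIdeal)
          (B := Localization.AtPrime p.2.asIdeal)).toRingHom.comp
          (algebraMap B (Localization.AtPrime p.2.asIdeal)) := by
      ext b
      simp [locMap]
    rw [h1, hcomp, ← Ideal.map_map, map_jacobson p.2]
    show _ = Ideal.map _ _
    rw [IsLocalRing.jacobson_eq_maximalIdeal _ bot_ne_top]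
    rfl

lemma map_locMap_radical_pow (p : MaximalSpectrum A × MaximalSpectrum B)
    [Finite (MaximalSpectrum A)] [Finite (MaximalSpectrum B)] (n : ℕ) :
    Ideal.map (locMap k p) ((tensorRadical k A B) ^ n) =
      (tensorRadical k (Localization.AtPrime p.1.asIdeal)
        (Localization.AtPrime p.2.asIdeal)) ^ n := by
  rw [Ideal.map_pow, map_locMap_radical]

end Tensor

end CTAux
namespace CTAux

section Tensor2

variable (k : Type*) [Field k] {A B : Type*} [CommRing A] [CommRing B]
  [Algebra k A] [Algebra k B]

lemma exists_clear (p : MaximalSpectrum A × MaximalSpectrum B)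
    (z : Localization.AtPrime p.1.asIdeal ⊗[k] Localization.AtPrime p.2.asIdeal) :
    ∃ (c : A ⊗[k] B) (s : A) (t : B), s ∈ p.1.asIdeal.primeCompl ∧
      t ∈ p.2.asIdeal.primeCompl ∧ z * (locMap k p) (s ⊗ₜ[k] t) = locMap k p c := by
  induction z with
  | zero =>
    exact ⟨0, 1, 1, Submonoid.one_mem _, Submonoid.one_mem _, by
      rw [zero_mul, map_zero]⟩
  | tmul x y =>
    obtain ⟨⟨a, s⟩, hx⟩ := IsLocalization.surj p.1.asIdeal.primeCompl x
    obtain ⟨⟨bb, t⟩, hy⟩ := IsLocalization.surj p.2.asIdeal.primeCompl y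
    refine ⟨a ⊗ₜ[k] bb, s, t, s.2, t.2, ?_⟩
    rw [locMap_tmul, locMap_tmul, Algebra.TensorProduct.tmul_mul_tmul, hx, hy]
  | add z₁ z₂ h₁ h₂ =>
    obtain ⟨c₁, s₁, t₁, hs₁, ht₁, hc₁⟩ := h₁
    obtain ⟨c₂, s₂, t₂, hs₂, ht₂, hc₂⟩ := h₂
    refine ⟨c₁ * (s₂ ⊗ₜ[k] t₂) + c₂ * (s₁ ⊗ₜ[k] t₁), s₁ * s₂, t₁ * t₂,
      Submonoid.mul_mem _ hs₁ hs₂, Submonoid.mul_mem _ ht₁ ht₂, ?_⟩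
    have hm : ((s₁ * s₂ : A) ⊗ₜ[k] (t₁ * t₂ : B)) = (s₁ ⊗ₜ[k] t₁) * (s₂ ⊗ₜ[k] t₂) := by
      rw [Algebra.TensorProduct.tmul_mul_tmul]
    rw [hm, map_add, map_mul, map_mul, map_mul, ← hc₁, ← hc₂]
    ring

lemma exists_annihilator (p : MaximalSpectrum A × MaximalSpectrum B)
    {y : A ⊗[k] B} (hy : locMap k p y = 0) :
    ∃ s ∈ p.1.asIdeal.primeCompl, ∃ t ∈ p.2.asIdeal.primeCompl,
      ((s : A) ⊗ₜ[k] (t : B)) * y = 0 := by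
  have hfac : ∀ w : A ⊗[k] B, locMap k p w =
      Algebra.TensorProduct.map (AlgHom.id k (Localization.AtPrime p.1.asIdeal))
        (IsScalarTower.toAlgHom k B (Localization.AtPrime p.2.asIdeal))
        (Algebra.TensorProduct.map
          (IsScalarTower.toAlgHom k A (Localization.AtPrime p.1.asIdeal))
          (AlgHom.id k B) w) := by
    intro w
    induction w with
    | zero => simp
    | add w₁ w₂ h₁ h₂ => simp [map_add, h₁, h₂]
    | tmul a b => simp [locMap]
  rw [hfac y] at hy
  obtain ⟨t, htT, ht⟩ := kernel_right (IsScalarTower.toAlgHom k B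
      (Localization.AtPrime p.2.asIdeal)) p.2.asIdeal.primeCompl
    (fun bb hbb => by
      obtain ⟨m, hm⟩ := (IsLocalization.map_eq_zero_iff p.2.asIdeal.primeCompl
        (Localization.AtPrime p.2.asIdeal) bb).mp hbb
      exact ⟨m, m.2, hm⟩) _ hy
  have ht' : Algebra.TensorProduct.map
      (IsScalarTower.toAlgHom k A (Localization.AtPrime p.1.asIdeal))
      (AlgHom.id k B) (((1 : A) ⊗ₜ[k] (t : B)) * y) = 0 := by
    rw [map_mul]
    have : Algebra.TensorProduct.map
        (IsScalarTower.toAlgHom k A (Localization.AtPrime p.1.asIdeal))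
        (AlgHom.id k B) ((1 : A) ⊗ₜ[k] (t : B)) = (1 : Localization.AtPrime p.1.asIdeal)
          ⊗ₜ[k] (t : B) := by simp
    rw [this]
    exact ht
  obtain ⟨s, hsS, hs⟩ := kernel_left (IsScalarTower.toAlgHom k A
      (Localization.AtPrime p.1.asIdeal)) p.1.asIdeal.primeCompl
    (fun aa haa => by
      obtain ⟨m, hm⟩ := (IsLocalization.map_eq_zero_iff p.1.asIdeal.primeCompl
        (Localization.AtPrime p.1.asIdeal) aa).mp haa
      exact ⟨m, m.2, hm⟩) _ ht'
  refine ⟨s, hsS, t, htT, ?_⟩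
  have hst : ((s : A) ⊗ₜ[k] (t : B)) = ((s : A) ⊗ₜ[k] (1 : B)) * ((1 : A) ⊗ₜ[k] (t : B)) := by
    rw [Algebra.TensorProduct.tmul_mul_tmul, mul_one, one_mul]
  rw [hst, mul_assoc]
  exact hs

variable [Finite (MaximalSpectrum A)] [Finite (MaximalSpectrum B)]

lemma exists_approx (p : MaximalSpectrum A × MaximalSpectrum B) (n : ℕ)
    (z : Localization.AtPrime p.1.asIdeal ⊗[k] Localization.AtPrime p.2.asIdeal) :
    ∃ c : A ⊗[k] B, locMap k p c - z ∈
      (tensorRadical k (Localization.AtPrime p.1.asIdeal)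
        (Localization.AtPrime p.2.asIdeal)) ^ n := by
  rcases Nat.eq_zero_or_pos n with hn | hn
  · refine ⟨0, ?_⟩
    rw [hn, pow_zero, Ideal.one_eq_top]
    trivial
  obtain ⟨c₀, s, t, hs, ht, hclear⟩ := exists_clear k p z
  obtain ⟨a, ha⟩ := exists_inv_mod_q hn p.1 hs
  obtain ⟨b, hb⟩ := exists_inv_mod_q hn p.2 ht
  refine ⟨(a ⊗ₜ[k] b) * c₀, ?_⟩
  have hw : locMap k p ((a * s) ⊗ₜ[k] (b * t)) - 1 ∈
      (tensorRadical k (Localization.AtPrime p.1.asIdeal)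
        (Localization.AtPrime p.2.asIdeal)) ^ n :=
    locMap_tmul_sub_one_mem k p ha hb
  have hid : locMap k p ((a ⊗ₜ[k] b) * c₀) - z =
      z * (locMap k p ((a * s) ⊗ₜ[k] (b * t)) - 1) := by
    have hm : ((a * s : A) ⊗ₜ[k] (b * t : B)) = (a ⊗ₜ[k] b) * (s ⊗ₜ[k] t) := by
      rw [Algebra.TensorProduct.tmul_mul_tmul]
    rw [map_mul, ← hclear, hm, map_mul]
    ring
  rw [hid]
  exact Ideal.mul_mem_left _ _ hw

lemma exists_partition_tensor (n : ℕ) :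
    ∃ E : MaximalSpectrum A × MaximalSpectrum B → A ⊗[k] B,
      ∀ p, (locMap k p (E p) - 1 ∈
        (tensorRadical k (Localization.AtPrime p.1.asIdeal)
          (Localization.AtPrime p.2.asIdeal)) ^ n) ∧
        ∀ p', p' ≠ p → locMap k p (E p') ∈
          (tensorRadical k (Localization.AtPrime p.1.asIdeal)
            (Localization.AtPrime p.2.asIdeal)) ^ n := by
  rcases Nat.eq_zero_or_pos n with hn | hn
  · refine ⟨fun _ => 1, fun p => ?_⟩
    rw [hn, pow_zero, Ideal.one_eq_top]
    exact ⟨trivial, fun _ _ => trivial⟩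
  obtain ⟨e, he1, he2⟩ := exists_partition (A := A) hn
  obtain ⟨f, hf1, hf2⟩ := exists_partition (A := B) hn
  refine ⟨fun p => e p.1 ⊗ₜ[k] f p.2, fun p => ⟨locMap_tmul_sub_one_mem k p (he1 p.1) (hf1 p.2),
    fun p' hp' => ?_⟩⟩
  have hcase : p'.1 ≠ p.1 ∨ p'.2 ≠ p.2 := by
    by_contra hcon
    push_neg at hcon
    exact hp' (Prod.ext hcon.1 hcon.2)
  rcases hcase with hc | hc
  · exact locMap_tmul_mem_left k p (he2 p'.1 p.1 hc.symm) _
  · exact locMap_tmul_mem_right k p (hf2 p'.2 p.2 hc.symm) _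

end Tensor2

end CTAux
namespace CTAux

section Tensor3

variable (k : Type*) [Field k] {A B : Type*} [CommRing A] [CommRing B]
  [Algebra k A] [Algebra k B] [Finite (MaximalSpectrum A)] [Finite (MaximalSpectrum B)]

lemma mem_radpow_of_forall (n : ℕ) {x : A ⊗[k] B}
    (h : ∀ p : MaximalSpectrum A × MaximalSpectrum B, locMap k p x ∈
      (tensorRadical k (Localization.AtPrime p.1.asIdeal)
        (Localization.AtPrime p.2.asIdeal)) ^ n) :
    x ∈ (tensorRadical k A B) ^ n := by
  classical
  rcases Nat.eq_zero_or_pos n with hn | hn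
  · rw [hn, pow_zero, Ideal.one_eq_top]; trivial
  cases nonempty_fintype (MaximalSpectrum A)
  cases nonempty_fintype (MaximalSpectrum B)
  have stepA : ∀ p : MaximalSpectrum A × MaximalSpectrum B,
      ∃ s ∈ p.1.asIdeal.primeCompl, ∃ t ∈ p.2.asIdeal.primeCompl,
        ((s : A) ⊗ₜ[k] (t : B)) * x ∈ (tensorRadical k A B) ^ n := by
    intro p
    have hx : locMap k p x ∈ Ideal.map (locMap k p) ((tensorRadical k A B) ^ n) := by
      rw [map_locMap_radical_pow]; exact h p
    have claim : ∀ (w : Localization.AtPrime p.1.asIdeal ⊗[k] Localization.AtPrime p.2.asIdeal)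
        (_ : w ∈ Ideal.map (locMap k p) ((tensorRadical k A B) ^ n)),
        ∃ c ∈ (tensorRadical k A B) ^ n, ∃ s ∈ p.1.asIdeal.primeCompl,
          ∃ t ∈ p.2.asIdeal.primeCompl, w * locMap k p (s ⊗ₜ[k] t) = locMap k p c := by
      intro w hw
      refine Submodule.span_induction ?_ ?_ ?_ ?_ hw
      · rintro w ⟨g, hg, rfl⟩
        refine ⟨g, hg, 1, Submonoid.one_mem _, 1, Submonoid.one_mem _, ?_⟩
        rw [← Algebra.TensorProduct.one_def, map_one, mul_one]
      · exact ⟨0, zero_mem _, 1, Submonoid.one_mem _, 1, Submonoid.one_mem _, by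
          rw [zero_mul, map_zero]⟩
      · rintro w₁ w₂ _ _ ⟨c₁, hc₁, s₁, hs₁, t₁, ht₁, he₁⟩ ⟨c₂, hc₂, s₂, hs₂, t₂, ht₂, he₂⟩
        refine ⟨c₁ * (s₂ ⊗ₜ[k] t₂) + c₂ * (s₁ ⊗ₜ[k] t₁),
          add_mem (Ideal.mul_mem_right _ _ hc₁) (Ideal.mul_mem_right _ _ hc₂),
          s₁ * s₂, Submonoid.mul_mem _ hs₁ hs₂, t₁ * t₂, Submonoid.mul_mem _ ht₁ ht₂, ?_⟩
        have hm : ((s₁ * s₂ : A) ⊗ₜ[k] (t₁ * t₂ : B)) = (s₁ ⊗ₜ[k] t₁) * (s₂ ⊗ₜ[k] t₂) := by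
          rw [Algebra.TensorProduct.tmul_mul_tmul]
        rw [hm, map_add, map_mul, map_mul, map_mul, ← he₁, ← he₂]
        ring
      · rintro a w _ ⟨c, hc, s, hs, t, ht, he⟩
        obtain ⟨c₀, s₀, t₀, hs₀, ht₀, hcl⟩ := exists_clear k p a
        refine ⟨c₀ * c, Ideal.mul_mem_left _ _ hc, s₀ * s, Submonoid.mul_mem _ hs₀ hs,
          t₀ * t, Submonoid.mul_mem _ ht₀ ht, ?_⟩
        have hm : ((s₀ * s : A) ⊗ₜ[k] (t₀ * t : B)) = (s₀ ⊗ₜ[k] t₀) * (s ⊗ₜ[k] t) := by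
          rw [Algebra.TensorProduct.tmul_mul_tmul]
        rw [smul_eq_mul, hm, map_mul, map_mul, ← hcl, ← he]
        ring
    obtain ⟨c, hc, s, hs, t, ht, he⟩ := claim _ hx
    have h0 : locMap k p ((s ⊗ₜ[k] t) * x - c) = 0 := by
      rw [map_sub, map_mul, mul_comm, he, sub_self]
    obtain ⟨s', hs', t', ht', hann⟩ := exists_annihilator k p h0
    refine ⟨s * s', Submonoid.mul_mem _ hs hs', t * t', Submonoid.mul_mem _ ht ht', ?_⟩
    have hann' : (s' ⊗ₜ[k] t') * ((s ⊗ₜ[k] t) * x) = (s' ⊗ₜ[k] t') * c := by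
      have h2 := hann
      rw [mul_sub, sub_eq_zero] at h2
      exact h2
    have hexp : ((s * s' : A) ⊗ₜ[k] (t * t' : B)) * x = (s' ⊗ₜ[k] t') * c := by
      have h1 : ((s * s' : A) ⊗ₜ[k] (t * t' : B)) = (s' ⊗ₜ[k] t') * (s ⊗ₜ[k] t) := by
        rw [Algebra.TensorProduct.tmul_mul_tmul, mul_comm (s' : A) s, mul_comm (t' : B) t]
      rw [h1, mul_assoc]
      exact hann'
    rw [hexp]
    exact Ideal.mul_mem_left _ _ hc
  choose S hS T hT hST using stepA
  obtain ⟨e, he1, he2⟩ := exists_partition (A := A) hn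
  obtain ⟨f, hf1, hf2⟩ := exists_partition (A := B) hn
  have claim2 : ∀ p : MaximalSpectrum A × MaximalSpectrum B,
      (e p.1 ⊗ₜ[k] f p.2) * x ∈ (tensorRadical k A B) ^ n := by
    intro p
    obtain ⟨a, ha⟩ := exists_inv_mod_q hn p.1 (hS p)
    obtain ⟨b, hb⟩ := exists_inv_mod_q hn p.2 (hT p)
    have g1 : (1 - a * S p) * e p.1 ∈ ((⊥ : Ideal A).jacobson) ^ n := by
      apply mem_pow_jac
      intro t
      by_cases htp : t = p.1
      · subst htp
        refine Ideal.mul_mem_right _ _ ?_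
        have : (1 : A) - a * S p = -(a * S p - 1) := by ring
        rw [this]
        exact neg_mem ha
      · exact Ideal.mul_mem_left _ _ (he2 p.1 t htp)
    have g2 : (1 - b * T p) * f p.2 ∈ ((⊥ : Ideal B).jacobson) ^ n := by
      apply mem_pow_jac
      intro t
      by_cases htp : t = p.2
      · subst htp
        refine Ideal.mul_mem_right _ _ ?_
        have : (1 : B) - b * T p = -(b * T p - 1) := by ring
        rw [this]
        exact neg_mem hb
      · exact Ideal.mul_mem_left _ _ (hf2 p.2 t htp)
    have m3 : ((a * S p) ⊗ₜ[k] (b * T p)) * ((e p.1 ⊗ₜ[k] f p.2) * x) ∈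
        (tensorRadical k A B) ^ n := by
      have hr : ((a * S p) ⊗ₜ[k] (b * T p)) * ((e p.1 ⊗ₜ[k] f p.2) * x) =
          ((a ⊗ₜ[k] b) * (e p.1 ⊗ₜ[k] f p.2)) * (((S p : A) ⊗ₜ[k] (T p : B)) * x) := by
        have : ((a * S p) ⊗ₜ[k] (b * T p)) = (a ⊗ₜ[k] b) * ((S p : A) ⊗ₜ[k] (T p : B)) := by
          rw [Algebra.TensorProduct.tmul_mul_tmul]
        rw [this]
        ring
      rw [hr]
      exact Ideal.mul_mem_left _ _ (hST p)
    have m12 : (e p.1 ⊗ₜ[k] f p.2) * x -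
        ((a * S p) ⊗ₜ[k] (b * T p)) * ((e p.1 ⊗ₜ[k] f p.2) * x) ∈
        (tensorRadical k A B) ^ n := by
      have hid : (e p.1 ⊗ₜ[k] f p.2) * x -
          ((a * S p) ⊗ₜ[k] (b * T p)) * ((e p.1 ⊗ₜ[k] f p.2) * x) =
          ((((1 - a * S p) * e p.1) ⊗ₜ[k] f p.2) * x) +
            (((a * S p * e p.1) ⊗ₜ[k] ((1 - b * T p) * f p.2)) * x) := by
        have e1 : (((1 - a * S p) * e p.1) ⊗ₜ[k] f p.2) =
            (e p.1 ⊗ₜ[k] f p.2) - ((a * S p * e p.1) ⊗ₜ[k] f p.2) := by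
          rw [sub_mul, one_mul, sub_tmul]
        have e2 : ((a * S p * e p.1) ⊗ₜ[k] ((1 - b * T p) * f p.2)) =
            ((a * S p * e p.1) ⊗ₜ[k] f p.2) - ((a * S p * e p.1) ⊗ₜ[k] (b * T p * f p.2)) := by
          rw [sub_mul, one_mul, tmul_sub]
        have e3 : ((a * S p) ⊗ₜ[k] (b * T p)) * (e p.1 ⊗ₜ[k] f p.2) =
            ((a * S p * e p.1) ⊗ₜ[k] (b * T p * f p.2)) := by
          rw [Algebra.TensorProduct.tmul_mul_tmul]
        rw [e1, e2, ← mul_assoc, e3]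
        ring
      rw [hid]
      exact add_mem (Ideal.mul_mem_right _ _ (tmul_mem_radpow_left k n g1 _))
        (Ideal.mul_mem_right _ _ (tmul_mem_radpow_right k n g2 _))
    have hfin := add_mem m12 m3
    rw [sub_add_cancel] at hfin
    exact hfin
  have hu : (1 : A) - (∑ r : MaximalSpectrum A, e r) ∈ ((⊥ : Ideal A).jacobson) ^ n := by
    have hmem : (∑ r : MaximalSpectrum A, e r) - 1 ∈ ((⊥ : Ideal A).jacobson) ^ n := by
      apply mem_pow_jac
      intro r
      rw [← Finset.add_sum_erase Finset.univ e (Finset.mem_univ r)]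
      have hre : e r + (∑ t ∈ Finset.univ.erase r, e t) - 1 =
          (e r - 1) + ∑ t ∈ Finset.univ.erase r, e t := by ring
      rw [hre]
      exact add_mem (he1 r) (Ideal.sum_mem _ fun t ht => he2 t r (Finset.mem_erase.mp ht).1.symm)
    have : (1 : A) - (∑ r : MaximalSpectrum A, e r) = -((∑ r : MaximalSpectrum A, e r) - 1) := by
      ring
    rw [this]
    exact neg_mem hmem
  have hv : (1 : B) - (∑ s : MaximalSpectrum B, f s) ∈ ((⊥ : Ideal B).jacobson) ^ n := by
    have hmem : (∑ s : MaximalSpectrum B, f s) - 1 ∈ ((⊥ : Ideal B).jacobson) ^ n := by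
      apply mem_pow_jac
      intro r
      rw [← Finset.add_sum_erase Finset.univ f (Finset.mem_univ r)]
      have hre : f r + (∑ t ∈ Finset.univ.erase r, f t) - 1 =
          (f r - 1) + ∑ t ∈ Finset.univ.erase r, f t := by ring
      rw [hre]
      exact add_mem (hf1 r) (Ideal.sum_mem _ fun t ht => hf2 t r (Finset.mem_erase.mp ht).1.symm)
    have : (1 : B) - (∑ s : MaximalSpectrum B, f s) = -((∑ s : MaximalSpectrum B, f s) - 1) := by
      ring
    rw [this]
    exact neg_mem hmem
  have hsum : x - ∑ p : MaximalSpectrum A × MaximalSpectrum B, (e p.1 ⊗ₜ[k] f p.2) * x ∈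
      (tensorRadical k A B) ^ n := by
    have hs1 : (∑ p : MaximalSpectrum A × MaximalSpectrum B, (e p.1 ⊗ₜ[k] f p.2) * x) =
        (∑ p : MaximalSpectrum A × MaximalSpectrum B, e p.1 ⊗ₜ[k] f p.2) * x :=
      (Finset.sum_mul _ _ _).symm
    have hs2 : (∑ p : MaximalSpectrum A × MaximalSpectrum B, e p.1 ⊗ₜ[k] f p.2) =
        (∑ r : MaximalSpectrum A, e r) ⊗ₜ[k] (∑ s : MaximalSpectrum B, f s) := by
      rw [Fintype.sum_prod_type, sum_tmul]
      exact Finset.sum_congr rfl fun r _ => (tmul_sum (e r) Finset.univ f).symm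
    have hid : x - ∑ p : MaximalSpectrum A × MaximalSpectrum B, (e p.1 ⊗ₜ[k] f p.2) * x =
        ((1 : A ⊗[k] B) -
          (∑ r : MaximalSpectrum A, e r) ⊗ₜ[k] (∑ s : MaximalSpectrum B, f s)) * x := by
      rw [hs1, hs2, sub_mul, one_mul]
    rw [hid]
    apply Ideal.mul_mem_right
    have hone : (1 : A ⊗[k] B) -
        (∑ r : MaximalSpectrum A, e r) ⊗ₜ[k] (∑ s : MaximalSpectrum B, f s) =
        ((1 : A) - ∑ r : MaximalSpectrum A, e r) ⊗ₜ[k] (∑ s : MaximalSpectrum B, f s) +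
          (1 : A) ⊗ₜ[k] ((1 : B) - ∑ s : MaximalSpectrum B, f s) := by
      rw [sub_tmul, tmul_sub, Algebra.TensorProduct.one_def]
      abel
    rw [hone]
    exact add_mem (tmul_mem_radpow_left k n hu _) (tmul_mem_radpow_right k n hv _)
  have hsum2 : (∑ p : MaximalSpectrum A × MaximalSpectrum B, (e p.1 ⊗ₜ[k] f p.2) * x) ∈
      (tensorRadical k A B) ^ n :=
    Ideal.sum_mem _ (fun p _ => claim2 p)
  have final := add_mem hsum hsum2
  rw [sub_add_cancel] at final
  exact final

end Tensor3

end CTAux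
namespace CTAux

section Completion

variable {R S : Type*} [CommRing R] [CommRing S] (f : R →+* S) (I : Ideal R) (J : Ideal S)

lemma smul_top_eq (n : ℕ) : (I ^ n • ⊤ : Ideal R) = I ^ n := by ext x; simp

/-- The induced map on quotients by powers. -/
noncomputable def levelMap (hf : Ideal.map f I ≤ J) (n : ℕ) :
    R ⧸ (I ^ n • ⊤ : Ideal R) →+* S ⧸ (J ^ n • ⊤ : Ideal S) :=
  Ideal.Quotient.lift _ ((Ideal.Quotient.mk (J ^ n • ⊤ : Ideal S)).comp f) (by
    intro a ha
    rw [smul_top_eq] at ha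
    have h2 : f a ∈ J ^ n := by
      have hle : Ideal.map f (I ^ n) ≤ J ^ n := by
        rw [Ideal.map_pow]; exact Ideal.pow_right_mono hf n
      exact hle (Ideal.mem_map_of_mem f ha)
    show Ideal.Quotient.mk (J ^ n • ⊤ : Ideal S) (f a) = 0
    rw [Ideal.Quotient.eq_zero_iff_mem, smul_top_eq]
    exact h2)

lemma levelMap_mk (hf : Ideal.map f I ≤ J) (n : ℕ) (x : R) :
    levelMap f I J hf n (Ideal.Quotient.mk _ x) = Ideal.Quotient.mk _ (f x) := rfl

lemma levelMap_transition (hf : Ideal.map f I ≤ J) {m n : ℕ} (hmn : m ≤ n)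
    (c : R ⧸ (I ^ n • ⊤ : Ideal R)) :
    AdicCompletion.transitionMap J S hmn (levelMap f I J hf n c) =
      levelMap f I J hf m (AdicCompletion.transitionMap I R hmn c) := by
  obtain ⟨x, rfl⟩ := Ideal.Quotient.mk_surjective c
  rfl

/-- The induced ring homomorphism on adic completions. -/
noncomputable def completionMap (hf : Ideal.map f I ≤ J) :
    AdicCompletion I R →+* AdicCompletion J S where
  toFun x := ⟨fun n => levelMap f I J hf n (x.val n), by
    intro m n hmn
    rw [levelMap_transition, x.property hmn]⟩
  map_one' := by
    apply AdicCompletion.ext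
    intro n
    show levelMap f I J hf n ((1 : AdicCompletion I R).val n) = 1
    rw [AdicCompletion.val_one, map_one]
  map_mul' x y := by
    apply AdicCompletion.ext
    intro n
    show levelMap f I J hf n ((x * y).val n) = _ * _
    rw [AdicCompletion.val_mul, map_mul]
  map_zero' := by
    apply AdicCompletion.ext
    intro n
    show levelMap f I J hf n ((0 : AdicCompletion I R).val n) = 0
    rw [AdicCompletion.val_zero_apply, map_zero]
  map_add' x y := by
    apply AdicCompletion.ext
    intro n
    show levelMap f I J hf n ((x + y).val n) = _ + _
    rw [AdicCompletion.val_add_apply, map_add]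

lemma completionMap_val (hf : Ideal.map f I ≤ J) (x : AdicCompletion I R) (n : ℕ) :
    (completionMap f I J hf x).val n = levelMap f I J hf n (x.val n) := rfl

end Completion

section Level

variable (k : Type*) [Field k] {A B : Type*} [CommRing A] [CommRing B]
  [Algebra k A] [Algebra k B] [Finite (MaximalSpectrum A)] [Finite (MaximalSpectrum B)]

lemma radical_le (p : MaximalSpectrum A × MaximalSpectrum B) :
    Ideal.map (locMap k p).toRingHom (tensorRadical k A B) ≤
      tensorRadical k (Localization.AtPrime p.1.asIdeal)
        (Localization.AtPrime p.2.asIdeal) :=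
  le_of_eq (map_locMap_radical k p)

/-- The combined level map to the product of the local quotients. -/
noncomputable def gLevel (n : ℕ) :
    (A ⊗[k] B) ⧸ ((tensorRadical k A B) ^ n • ⊤ : Ideal (A ⊗[k] B)) →+*
      ∀ p : MaximalSpectrum A × MaximalSpectrum B,
        (Localization.AtPrime p.1.asIdeal ⊗[k] Localization.AtPrime p.2.asIdeal) ⧸
          ((tensorRadical k (Localization.AtPrime p.1.asIdeal)
            (Localization.AtPrime p.2.asIdeal)) ^ n • ⊤ :
              Ideal (Localization.AtPrime p.1.asIdeal ⊗[k] Localization.AtPrime p.2.asIdeal)) :=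
  Pi.ringHom fun p => levelMap (locMap k p).toRingHom _ _ (radical_le k p) n

lemma gLevel_injective (n : ℕ) : Function.Injective (gLevel k (A := A) (B := B) n) := by
  intro c₁ c₂ hc
  obtain ⟨x₁, rfl⟩ := Ideal.Quotient.mk_surjective c₁
  obtain ⟨x₂, rfl⟩ := Ideal.Quotient.mk_surjective c₂
  rw [Ideal.Quotient.eq, smul_top_eq]
  apply mem_radpow_of_forall
  intro p
  have hp := congrFun hc p
  rw [show (gLevel k (A := A) (B := B) n (Ideal.Quotient.mk _ x₁)) p =
      Ideal.Quotient.mk _ ((locMap k p) x₁) from rfl,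
    show (gLevel k (A := A) (B := B) n (Ideal.Quotient.mk _ x₂)) p =
      Ideal.Quotient.mk _ ((locMap k p) x₂) from rfl] at hp
  have := Ideal.Quotient.eq.mp hp
  rw [smul_top_eq] at this
  rw [map_sub]
  exact this

lemma gLevel_surjective (n : ℕ) : Function.Surjective (gLevel k (A := A) (B := B) n) := by
  classical
  cases nonempty_fintype (MaximalSpectrum A)
  cases nonempty_fintype (MaximalSpectrum B)
  intro w
  choose z hz using fun p => Ideal.Quotient.mk_surjective (w p)
  choose c hc using fun p => exists_approx k p n (z p)
  obtain ⟨E, hE⟩ := exists_partition_tensor (A := A) (B := B) k n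
  refine ⟨Ideal.Quotient.mk _ (∑ p : MaximalSpectrum A × MaximalSpectrum B, c p * E p), ?_⟩
  funext p
  show Ideal.Quotient.mk _ ((locMap k p) _) = w p
  rw [← hz p, Ideal.Quotient.eq, smul_top_eq]
  have hdecomp : (locMap k p) (∑ p' : MaximalSpectrum A × MaximalSpectrum B, c p' * E p') -
      z p =
      (∑ p' ∈ Finset.univ.erase p, (locMap k p) (c p') * (locMap k p) (E p')) +
        ((locMap k p) (c p) * ((locMap k p) (E p) - 1) + ((locMap k p) (c p) - z p)) := by
    rw [map_sum]
    rw [← Finset.add_sum_erase Finset.univ _ (Finset.mem_univ p)]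
    simp only [map_mul]
    ring
  rw [hdecomp]
  refine add_mem (Ideal.sum_mem _ fun p' hp' => ?_) (add_mem ?_ ?_)
  · exact Ideal.mul_mem_left _ _ ((hE p).2 p' (Finset.mem_erase.mp hp').1)
  · exact Ideal.mul_mem_left _ _ (hE p).1
  · exact hc p

end Level

end CTAux

/-- Let `A` and `B` be two semilocal Noetherian commutative rings
containing a field `k`, with maximal ideals `m_1, …, m_p` (of `A`) and `n_1, …, n_q`
(of `B`). Then `A ⊗̂[k] B` is isomorphic, as a ring, to the finite product over all
pairs `(r, s)` of the completed tensor products `A_{m_r} ⊗̂[k] B_{n_s}` of the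
localizations. -/
theorem completedTensor_ringEquiv_pi_localization (k A B : Type*) [Field k]
    [CommRing A] [CommRing B] [IsNoetherianRing A] [IsNoetherianRing B]
    [Algebra k A] [Algebra k B]
    [Finite (MaximalSpectrum A)] [Finite (MaximalSpectrum B)] :
    Nonempty
      (CompletedTensor k A B ≃+*
        ∀ pq : MaximalSpectrum A × MaximalSpectrum B,
          CompletedTensor k (Localization.AtPrime pq.1.asIdeal)
            (Localization.AtPrime pq.2.asIdeal)) := by
  classical
  constructor
  let Φ : CompletedTensor k A B →+* ∀ pq : MaximalSpectrum A × MaximalSpectrum B,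
      CompletedTensor k (Localization.AtPrime pq.1.asIdeal)
        (Localization.AtPrime pq.2.asIdeal) :=
    Pi.ringHom fun p => CTAux.completionMap (CTAux.locMap k p).toRingHom
      (tensorRadical k A B) _ (CTAux.radical_le k p)
  refine RingEquiv.ofBijective Φ ⟨?_, ?_⟩
  · intro x y hxy
    apply AdicCompletion.ext
    intro n
    apply CTAux.gLevel_injective k n
    funext p
    show (Φ x p).val n = (Φ y p).val n
    rw [hxy]
  · intro y
    choose c hc using fun n =>
      CTAux.gLevel_surjective k (A := A) (B := B) n (fun p => (y p).val n)
    refine ⟨⟨fun n => c n, ?_⟩, ?_⟩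
    · intro m n hmn
      apply CTAux.gLevel_injective k m
      funext p
      have h1 : (CTAux.gLevel k (A := A) (B := B) m)
          (AdicCompletion.transitionMap (tensorRadical k A B) (A ⊗[k] B) hmn (c n)) p =
          AdicCompletion.transitionMap _ _ hmn ((CTAux.gLevel k (A := A) (B := B) n) (c n) p) :=
        (CTAux.levelMap_transition _ _ _ (CTAux.radical_le k p) hmn (c n)).symm
      rw [h1, congrFun (hc n) p, (y p).property hmn]
      exact (congrFun (hc m) p).symm
    · funext p
      apply AdicCompletion.ext
      intro n
      exact congrFun (hc n) p
end
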